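/- arXiv:1603.00268 — 4 statements merged into one kernel-verified Lean document; each statement's English description precedes it below -/
import Mathlib

section
/- Let X be a compact metric space on which the inductive limit K(∞) of an increasing chain of compact groups K(1) ⊆ K(2) ⊆ ⋯ acts by isometric homeomorphisms. Suppose x_0 ∈ X and the sequence of orbital measures μ_n^{x_0} has a weak limit point μ in the space of Borel probability measures. Then μ is K(∞)-invariant and ergodic. -/
open MeasureTheory Filter Topology Metric
open scoped NNReal ENNReal

section AuxLemmas

variable {X : Type*} [MetricSpace X] [CompactSpace X] [MeasurableSpace X] [BorelSpace X]

/-- A continuous real function on a compact metric space is integrable for finite measures. -/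
lemma aux_integrable_of_continuous (κ : Measure X) [IsFiniteMeasure κ] {f : X → ℝ}
    (hf : Continuous f) : Integrable f κ :=
  BoundedContinuousFunction.integrable κ (BoundedContinuousFunction.mkOfCompact ⟨f, hf⟩)

/-- Two finite Borel measures on a compact metric space agreeing on integrals of all continuous
functions coincide. -/
lemma aux_measure_ext (κ₁ κ₂ : Measure X) [IsFiniteMeasure κ₁] [IsFiniteMeasure κ₂]
    (h : ∀ f : C(X, ℝ), ∫ x, f x ∂κ₁ = ∫ x, f x ∂κ₂) : κ₁ = κ₂ := by
  apply MeasureTheory.ext_of_forall_lintegral_eq_of_IsFiniteMeasure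
  intro f
  have hc : Continuous fun x => ((f x : ℝ≥0) : ℝ) := NNReal.continuous_coe.comp f.continuous
  rw [lintegral_coe_eq_integral _ (aux_integrable_of_continuous κ₁ hc),
    lintegral_coe_eq_integral _ (aux_integrable_of_continuous κ₂ hc)]
  congr 1
  exact h ⟨_, hc⟩

/-- Left translation invariance of integration against a left-invariant probability measure,
with no measurability assumptions on the integrand. -/
lemma aux_integral_translate {K : Type*} [Group K] [MeasurableSpace K]
    (m : Measure K) [IsProbabilityMeasure m] (g : K)
    (hm : ∀ h : K, Measure.map (fun k => h * k) m = m) (ψ : K → ℝ) :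
    ∫ k, ψ (g * k) ∂m = ∫ k, ψ k ∂m := by
  have hne : ∀ h : K, AEMeasurable (fun k => h * k) m := by
    intro h
    by_contra hc
    have h0 := Measure.map_of_not_aemeasurable hc
    rw [hm h] at h0
    exact (IsProbabilityMeasure.ne_zero m) h0
  by_cases hψ : AEStronglyMeasurable ψ m
  · have hψ' : AEStronglyMeasurable ψ (Measure.map (fun k => g * k) m) := by
      rw [hm g]; exact hψ
    calc ∫ k, ψ (g * k) ∂m = ∫ k, ψ k ∂(Measure.map (fun k => g * k) m) :=
          (integral_map (hne g) hψ').symm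
      _ = ∫ k, ψ k ∂m := by rw [hm g]
  · have h2 : ¬ AEStronglyMeasurable (fun k => ψ (g * k)) m := by
      intro hc
      apply hψ
      have hc' : AEStronglyMeasurable (fun k => ψ (g * k)) (Measure.map (fun k => g⁻¹ * k) m) := by
        rw [hm g⁻¹]; exact hc
      have h3 := hc'.comp_aemeasurable (hne g⁻¹)
      simpa [Function.comp_def, mul_inv_cancel_left] using h3
    rw [integral_non_aestronglyMeasurable hψ, integral_non_aestronglyMeasurable h2]

end AuxLemmas

set_option maxHeartbeats 1000000 in
/-- Let the union `K(∞) = ⋃ K n` of an increasing chain of compact subgroups act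
by isometric homeomorphisms on a compact metric space `X`. If `μ` is a weak limit point of the
orbital measures `μ_n^{x₀}`, then `μ` is `K(∞)`-invariant and ergodic. -/
theorem weak_limit_point_of_orbital_measures_ergodic
    {G X : Type*} [Group G] [TopologicalSpace G] [IsTopologicalGroup G] [MeasurableSpace G]
    [MetricSpace X] [CompactSpace X] [MeasurableSpace X] [BorelSpace X] [MulAction G X]
    (hiso : ∀ g : G, Isometry (fun x : X => g • x))
    (K : ℕ → Subgroup G) (hmono : Monotone K)
    (hcpt : ∀ n, IsCompact ((K n : Set G)))
    (hunion : ∀ g : G, ∃ n, g ∈ K n)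
    (m : ∀ n, Measure (K n)) (hprob : ∀ n, IsProbabilityMeasure (m n))
    (hhaar : ∀ n (h : K n), Measure.map (fun g => h * g) (m n) = m n)
    (x₀ : X) (μ : Measure X) (hμ : IsProbabilityMeasure μ)
    (φ : ℕ → ℕ) (hφ : StrictMono φ)
    (hconv : ∀ f : C(X, ℝ),
      Tendsto (fun i => ∫ g : K (φ i), f ((g : G) • x₀) ∂(m (φ i))) atTop
        (𝓝 (∫ y, f y ∂μ))) :
    (∀ (g : G) (S : Set X), MeasurableSet S → μ ((fun y => g • y) ⁻¹' S) = μ S) ∧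
      (∀ S : Set X, MeasurableSet S → (∀ g : G, (fun y => g • y) ⁻¹' S = S) →
        μ S = 0 ∨ μ S = 1) := by
  have hcont : ∀ g : G, Continuous (fun x : X => g • x) := fun g => (hiso g).continuous
  have hmeas : ∀ g : G, Measurable (fun x : X => g • x) := fun g => (hcont g).measurable
  -- Step 1 : μ is invariant.
  have hmapμ : ∀ g : G, Measure.map (fun y => g • y) μ = μ := by
    intro g
    haveI : IsProbabilityMeasure (Measure.map (fun y => g • y) μ) :=
      Measure.isProbabilityMeasure_map (hmeas g).aemeasurable
    apply aux_measure_ext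
    intro f
    set F : C(X, ℝ) := f.comp ⟨fun y => g • y, hcont g⟩ with hF
    obtain ⟨n₀, hg⟩ := hunion g
    have h2 : ∀ᶠ i in atTop, (∫ h : K (φ i), F ((h : G) • x₀) ∂(m (φ i)))
        = ∫ h : K (φ i), f ((h : G) • x₀) ∂(m (φ i)) := by
      filter_upwards [eventually_ge_atTop n₀] with i hi
      have hgi : g ∈ K (φ i) := hmono (le_trans hi hφ.le_apply) hg
      haveI := hprob (φ i)
      have h3 := aux_integral_translate (m (φ i)) (⟨g, hgi⟩ : K (φ i)) (hhaar (φ i))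
        (fun k => f ((k : G) • x₀))
      calc (∫ h : K (φ i), F ((h : G) • x₀) ∂(m (φ i)))
          = ∫ k : K (φ i), f ((((⟨g, hgi⟩ : K (φ i)) * k : K (φ i)) : G) • x₀) ∂(m (φ i)) := by
            apply integral_congr_ae
            filter_upwards with k
            simp only [hF, ContinuousMap.comp_apply, ContinuousMap.coe_mk, Subgroup.coe_mul,
              mul_smul]
        _ = ∫ k : K (φ i), f ((k : G) • x₀) ∂(m (φ i)) := h3
    have h5 : ∫ y, F y ∂μ = ∫ y, f y ∂μ :=
      tendsto_nhds_unique ((hconv F).congr' h2) (hconv f)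
    calc ∫ x, f x ∂(Measure.map (fun y => g • y) μ)
        = ∫ y, f (g • y) ∂μ :=
          integral_map (hmeas g).aemeasurable f.continuous.aestronglyMeasurable
      _ = ∫ y, f y ∂μ := by simpa [hF] using h5
  -- The orbit closure Y.
  set Y : Set X := closure (Set.range fun g : G => g • x₀) with hYdef
  have hYclosed : IsClosed Y := isClosed_closure
  have hx₀Y : x₀ ∈ Y := subset_closure ⟨1, one_smul _ _⟩
  have hYne : Y.Nonempty := ⟨x₀, hx₀Y⟩
  have hYinv : ∀ (g : G), ∀ y ∈ Y, g • y ∈ Y := by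
    intro g y hy
    have hsub : (fun x => g • x) '' (Set.range fun h : G => h • x₀)
        ⊆ Set.range fun h : G => h • x₀ := by
      rintro _ ⟨_, ⟨h, rfl⟩, rfl⟩
      exact ⟨g * h, by simpa using mul_smul g h x₀⟩
    have h2 := image_closure_subset_closure_image (s := Set.range fun h : G => h • x₀) (hcont g)
    exact closure_mono hsub (h2 ⟨y, hy, rfl⟩)
  have hYdense : ∀ y ∈ Y, ∀ z ∈ Y, ∀ ε : ℝ, 0 < ε → ∃ g : G, dist (g • y) z < ε := by
    intro y hy z hz ε hε
    obtain ⟨y', ⟨h, rfl⟩, hy'⟩ := Metric.mem_closure_iff.mp hy (ε / 2) (by positivity)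
    obtain ⟨z', ⟨g', rfl⟩, hz'⟩ := Metric.mem_closure_iff.mp hz (ε / 2) (by positivity)
    refine ⟨g' * h⁻¹, ?_⟩
    have e1 : (g' * h⁻¹) • (h • x₀) = g' • x₀ := by
      rw [smul_smul, inv_mul_cancel_right]
    calc dist ((g' * h⁻¹) • y) z
        ≤ dist ((g' * h⁻¹) • y) ((g' * h⁻¹) • (h • x₀)) + dist ((g' * h⁻¹) • (h • x₀)) z :=
          dist_triangle _ _ _
      _ = dist y (h • x₀) + dist (g' • x₀) z := by
          rw [(hiso (g' * h⁻¹)).dist_eq, e1]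
      _ < ε / 2 + ε / 2 := by
          have := hz'
          rw [dist_comm (g' • x₀) z]
          exact add_lt_add hy' hz'
      _ = ε := by ring
  -- μ is supported on Y.
  have hμY : μ Yᶜ = 0 := by
    set fk : ℕ → C(X, ℝ) := fun k =>
      ⟨fun x => min 1 ((k : ℝ) * infDist x Y),
        continuous_const.min (continuous_const.mul (continuous_infDist_pt Y))⟩ with hfk
    have hf0 : ∀ k, ∫ y, fk k y ∂μ = 0 := by
      intro k
      have h1 : Tendsto (fun i => ∫ g : K (φ i), fk k ((g : G) • x₀) ∂(m (φ i))) atTop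
          (𝓝 (∫ y, fk k y ∂μ)) := hconv (fk k)
      have h2 : (fun i => ∫ g : K (φ i), fk k ((g : G) • x₀) ∂(m (φ i))) = fun _ => 0 := by
        funext i
        have h3 : ∀ g : K (φ i), fk k ((g : G) • x₀) = 0 := by
          intro g
          have hmem : (g : G) • x₀ ∈ Y := subset_closure ⟨g, rfl⟩
          simp [hfk, infDist_zero_of_mem hmem]
        simp only [h3, integral_zero]
      rw [h2] at h1
      exact (tendsto_nhds_unique tendsto_const_nhds h1).symm
    have hmeasYc : MeasurableSet Yᶜ := hYclosed.measurableSet.compl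
    have hdct : Tendsto (fun k => ∫ x, fk k x ∂μ) atTop
        (𝓝 (∫ x, Yᶜ.indicator (fun _ => (1 : ℝ)) x ∂μ)) := by
      apply tendsto_integral_of_dominated_convergence (fun _ => (1 : ℝ))
      · exact fun k => (fk k).continuous.aestronglyMeasurable
      · exact integrable_const 1
      · intro k
        filter_upwards with x
        have h0 : (0 : ℝ) ≤ min 1 ((k : ℝ) * infDist x Y) :=
          le_min one_pos.le (mul_nonneg (Nat.cast_nonneg k) infDist_nonneg)
        have h1 : min 1 ((k : ℝ) * infDist x Y) ≤ 1 := min_le_left _ _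
        simp only [hfk, ContinuousMap.coe_mk, Real.norm_eq_abs]
        rw [abs_of_nonneg h0]; exact h1
      · filter_upwards with x
        by_cases hx : x ∈ Y
        · have : ∀ k : ℕ, fk k x = 0 := by
            intro k; simp [hfk, infDist_zero_of_mem hx]
          simp only [this, Set.indicator_of_notMem (Set.notMem_compl_iff.mpr hx)]
          exact tendsto_const_nhds
        · have hd : 0 < infDist x Y := by
            rcases lt_or_eq_of_le (infDist_nonneg (s := Y) (x := x)) with h | h
            · exact h
            · refine absurd ?_ hx
              have hcl : x ∈ closure Y := (mem_closure_iff_infDist_zero hYne).mpr h.symm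
              rwa [hYclosed.closure_eq] at hcl
          have hind : Yᶜ.indicator (fun _ => (1 : ℝ)) x = 1 := Set.indicator_of_mem (by simpa using hx) fun _ => (1:ℝ)
          rw [hind]
          apply tendsto_atTop_of_eventually_const (i₀ := ⌈1 / infDist x Y⌉₊)
          intro k hk
          have hk' : 1 / infDist x Y ≤ (k : ℝ) := le_trans (Nat.le_ceil _) (by exact_mod_cast hk)
          have : (1 : ℝ) ≤ (k : ℝ) * infDist x Y := by
            rw [div_le_iff₀ hd] at hk'
            linarith
          simp [hfk, min_eq_left this]
    have h6 : ∫ x, Yᶜ.indicator (fun _ => (1 : ℝ)) x ∂μ = (μ Yᶜ).toReal := by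
      rw [integral_indicator_const _ hmeasYc]; simp; rfl
    have h7 : (0 : ℝ) = (μ Yᶜ).toReal := by
      have := hdct
      simp only [hf0] at this
      rw [h6] at this
      exact tendsto_nhds_unique tendsto_const_nhds this
    have h8 : μ Yᶜ ≠ ⊤ := measure_ne_top μ _
    exact (ENNReal.toReal_eq_zero_iff _).mp h7.symm |>.resolve_right h8
  -- Key: almost constant averages.
  have key : ∀ (f : C(X, ℝ)) (ε : ℝ), 0 < ε → ∃ (n : ℕ) (_ : 0 < n) (gs : Fin n → G),
      ∀ y ∈ Y, ∀ z ∈ Y,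
        (∑ j, f (gs j • y)) / (n : ℝ) - (∑ j, f (gs j • z)) / (n : ℝ) ≤ ε := by
    intro f ε hε
    obtain ⟨r, hr, hfr⟩ : ∃ r > 0, ∀ a b : X, dist a b < r → |f a - f b| ≤ ε / 2 := by
      obtain ⟨δ, hδ, hd⟩ := Metric.uniformContinuous_iff.mp
        (CompactSpace.uniformContinuous_of_continuous f.continuous) (ε / 2) (by positivity)
      exact ⟨δ, hδ, fun a b hab => le_of_lt (by simpa [Real.dist_eq] using hd hab)⟩
    have hmod : ∀ (n : ℕ) (gs : Fin n → G) (a b : X), 0 < n → dist a b < r →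
        (∑ j, f (gs j • a)) / (n : ℝ) - (∑ j, f (gs j • b)) / (n : ℝ) ≤ ε / 2 := by
      intro n gs a b hn hab
      have hnR : (0 : ℝ) < n := by exact_mod_cast hn
      rw [div_sub_div_same, ← Finset.sum_sub_distrib]
      have hb : (∑ j, (f (gs j • a) - f (gs j • b))) ≤ (n : ℝ) * (ε / 2) := by
        have h1 : ∀ j : Fin n, f (gs j • a) - f (gs j • b) ≤ ε / 2 := by
          intro j
          have hd2 : dist (gs j • a) (gs j • b) < r :=
            lt_of_eq_of_lt ((hiso (gs j)).dist_eq a b) hab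
          exact le_trans (le_abs_self _) (hfr _ _ hd2)
        calc (∑ j, (f (gs j • a) - f (gs j • b))) ≤ ∑ _j : Fin n, (ε / 2) :=
              Finset.sum_le_sum (fun j _ => h1 j)
          _ = (n : ℝ) * (ε / 2) := by
              simp [Finset.sum_const, Finset.card_univ, nsmul_eq_mul]
      calc (∑ j, (f (gs j • a) - f (gs j • b))) / (n : ℝ) ≤ ((n : ℝ) * (ε / 2)) / n :=
            (div_le_div_iff_of_pos_right hnR).mpr hb
        _ = ε / 2 := by field_simp
    have hYcomp : IsCompact Y := hYclosed.isCompact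
    obtain ⟨k, w, hk0, hwY, hwcov⟩ : ∃ (k : ℕ) (w : Fin k → X), 0 < k ∧ (∀ b, w b ∈ Y) ∧
        ∀ z ∈ Y, ∃ b : Fin k, dist z (w b) < r / 2 := by
      obtain ⟨t, ht⟩ := hYcomp.elim_finite_subcover (fun w : Y => Metric.ball (w : X) (r / 2))
        (fun w => Metric.isOpen_ball)
        (fun y hy => Set.mem_iUnion.mpr ⟨⟨y, hy⟩, Metric.mem_ball_self (by positivity)⟩)
      refine ⟨t.card, fun b => ((t.equivFin.symm b : Y) : X), ?_, ?_, ?_⟩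
      · obtain ⟨v, hv, -⟩ := Set.mem_iUnion₂.mp (ht hx₀Y)
        exact Finset.card_pos.mpr ⟨v, hv⟩
      · exact fun b => (t.equivFin.symm b : Y).2
      · intro z hz
        obtain ⟨v, hv, hzv⟩ := Set.mem_iUnion₂.mp (ht hz)
        refine ⟨t.equivFin ⟨v, hv⟩, ?_⟩
        simp only [Equiv.symm_apply_apply]
        exact Metric.mem_ball.mp hzv
    have hk1 : 1 ≤ k := hk0
    have hkR : (0 : ℝ) < (k : ℝ) := by exact_mod_cast hk0
    set q : ℝ := ((k : ℝ) - 1) / k with hqdef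
    clear_value q
    have hq0 : 0 ≤ q := by
      rw [hqdef]
      apply div_nonneg _ hkR.le
      have : (1 : ℝ) ≤ (k : ℝ) := by exact_mod_cast hk1
      linarith
    have hq1 : q < 1 := by
      rw [hqdef, div_lt_one hkR]; linarith
    set C : ℝ := 2 * ‖f‖ with hCdef
    clear_value C
    have hfC : ∀ a b : X, f a - f b ≤ C := by
      intro a b
      have h1 := abs_le.mp (le_trans (le_refl |f a|)
        (by simpa [Real.norm_eq_abs] using f.norm_coe_le_norm a))
      have h2 := abs_le.mp (by simpa [Real.norm_eq_abs] using f.norm_coe_le_norm b)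
      rw [hCdef]; linarith
    have main : ∀ M : ℕ, ∃ (n : ℕ) (_ : 0 < n) (gs : Fin n → G),
        ∀ y ∈ Y, ∀ z ∈ Y,
          (∑ j, f (gs j • y)) / (n : ℝ) - (∑ j, f (gs j • z)) / (n : ℝ)
            ≤ ε / 2 + q ^ M * C := by
      intro M
      induction M with
      | zero =>
        refine ⟨1, one_pos, fun _ => 1, ?_⟩
        intro y hy z hz
        simp only [Fin.sum_univ_one, one_smul, Nat.cast_one, div_one, pow_zero, one_mul]
        have := hfC y z
        linarith
      | succ M ih =>
        obtain ⟨n, hn, gs, hgs⟩ := ih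
        have hnR : (0 : ℝ) < n := by exact_mod_cast hn
        have hPc : Continuous (fun x : X => (∑ j, f (gs j • x)) / (n : ℝ)) :=
          (continuous_finset_sum _ fun j _ => f.continuous.comp (hcont (gs j))).div_const _
        obtain ⟨ys, hysY, hysmin⟩ := hYcomp.exists_isMinOn hYne hPc.continuousOn
        have hgb : ∀ b : Fin k, ∃ g : G, dist (g • ys) (w b) < r / 2 := fun b =>
          hYdense ys hysY (w b) (hwY b) (r / 2) (by positivity)
        choose gb hgbd using hgb
        refine ⟨n * k, Nat.mul_pos hn hk0,
          fun i => gs (finProdFinEquiv.symm i).1 * (gb (finProdFinEquiv.symm i).2)⁻¹, ?_⟩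
        intro y hy z hz
        have hsum : ∀ x : X,
            (∑ i : Fin (n * k), f ((gs (finProdFinEquiv.symm i).1 *
                (gb (finProdFinEquiv.symm i).2)⁻¹) • x)) / ((n * k : ℕ) : ℝ)
            = (∑ b : Fin k, (∑ j, f (gs j • ((gb b)⁻¹ • x))) / (n : ℝ)) / (k : ℝ) := by
          intro x
          have h1 : (∑ i : Fin (n * k), f ((gs (finProdFinEquiv.symm i).1 *
                (gb (finProdFinEquiv.symm i).2)⁻¹) • x))
              = ∑ p : Fin n × Fin k, f ((gs p.1 * (gb p.2)⁻¹) • x) :=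
            Equiv.sum_comp finProdFinEquiv.symm
              (fun p : Fin n × Fin k => f ((gs p.1 * (gb p.2)⁻¹) • x))
          rw [h1, Fintype.sum_prod_type_right]
          have h2 : ∀ b : Fin k, (∑ a : Fin n, f ((gs a * (gb b)⁻¹) • x))
              = (n : ℝ) * ((∑ j, f (gs j • ((gb b)⁻¹ • x))) / (n : ℝ)) := by
            intro b
            have e : ∀ a : Fin n, f ((gs a * (gb b)⁻¹) • x)
                = f (gs a • ((gb b)⁻¹ • x)) := fun a => by rw [mul_smul]
            simp only [e]
            field_simp
          simp only [h2]
          rw [← Finset.mul_sum]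
          have hc : ((n * k : ℕ) : ℝ) = (n : ℝ) * k := by push_cast; ring
          rw [hc, mul_div_mul_left _ _ (ne_of_gt hnR)]
        rw [hsum y, hsum z]
        obtain ⟨b₀, hb₀⟩ := hwcov y hy
        have hyb : dist ((gb b₀)⁻¹ • y) ys < r := by
          have h3 : dist ((gb b₀)⁻¹ • y) ys = dist y (gb b₀ • ys) := by
            have h4 := (hiso (gb b₀)).dist_eq ((gb b₀)⁻¹ • y) ys
            simp only [smul_inv_smul] at h4
            exact h4.symm
          rw [h3]
          calc dist y (gb b₀ • ys) ≤ dist y (w b₀) + dist (w b₀) (gb b₀ • ys) :=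
                dist_triangle _ _ _
            _ < r / 2 + r / 2 := add_lt_add hb₀ (by rw [dist_comm]; exact hgbd b₀)
            _ = r := by ring
        have hymem : ∀ b : Fin k, (gb b)⁻¹ • y ∈ Y := fun b => hYinv _ y hy
        have hzmem : ∀ b : Fin k, (gb b)⁻¹ • z ∈ Y := fun b => hYinv _ z hz
        have hboundall : ∀ b : Fin k,
            (∑ j, f (gs j • ((gb b)⁻¹ • y))) / (n : ℝ)
              - (∑ j, f (gs j • ((gb b)⁻¹ • z))) / (n : ℝ) ≤ ε / 2 + q ^ M * C :=
          fun b => hgs _ (hymem b) _ (hzmem b)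
        have hb₀bound : (∑ j, f (gs j • ((gb b₀)⁻¹ • y))) / (n : ℝ)
            - (∑ j, f (gs j • ((gb b₀)⁻¹ • z))) / (n : ℝ) ≤ ε / 2 := by
          have h5 := hmod n gs ((gb b₀)⁻¹ • y) ys hn hyb
          have h6 : (∑ j, f (gs j • ys)) / (n : ℝ)
              ≤ (∑ j, f (gs j • ((gb b₀)⁻¹ • z))) / (n : ℝ) := hysmin (hzmem b₀)
          linarith
        have hsplit : (∑ b : Fin k, ((∑ j, f (gs j • ((gb b)⁻¹ • y))) / (n : ℝ)
              - (∑ j, f (gs j • ((gb b)⁻¹ • z))) / (n : ℝ)))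
            ≤ ((k : ℝ) - 1) * (ε / 2 + q ^ M * C) + ε / 2 := by
          rw [← Finset.sum_erase_add _ _ (Finset.mem_univ b₀)]
          have h7 := Finset.sum_le_card_nsmul (Finset.univ.erase b₀)
            (fun b => (∑ j, f (gs j • ((gb b)⁻¹ • y))) / (n : ℝ)
              - (∑ j, f (gs j • ((gb b)⁻¹ • z))) / (n : ℝ)) (ε / 2 + q ^ M * C)
            (fun b _ => hboundall b)
          have h8 : ((Finset.univ.erase b₀).card : ℝ) = (k : ℝ) - 1 := by
            rw [Finset.card_erase_of_mem (Finset.mem_univ b₀), Finset.card_univ,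
              Fintype.card_fin, Nat.cast_sub hk1, Nat.cast_one]
          rw [nsmul_eq_mul] at h7
          rw [h8] at h7
          linarith
        have hdiv : (∑ b : Fin k, (∑ j, f (gs j • ((gb b)⁻¹ • y))) / (n : ℝ)) / (k : ℝ)
              - (∑ b : Fin k, (∑ j, f (gs j • ((gb b)⁻¹ • z))) / (n : ℝ)) / (k : ℝ)
            = (∑ b : Fin k, ((∑ j, f (gs j • ((gb b)⁻¹ • y))) / (n : ℝ)
              - (∑ j, f (gs j • ((gb b)⁻¹ • z))) / (n : ℝ))) / (k : ℝ) := by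
          rw [div_sub_div_same, ← Finset.sum_sub_distrib]
        rw [hdiv]
        calc (∑ b : Fin k, ((∑ j, f (gs j • ((gb b)⁻¹ • y))) / (n : ℝ)
              - (∑ j, f (gs j • ((gb b)⁻¹ • z))) / (n : ℝ))) / (k : ℝ)
            ≤ (((k : ℝ) - 1) * (ε / 2 + q ^ M * C) + ε / 2) / (k : ℝ) :=
              (div_le_div_iff_of_pos_right hkR).mpr hsplit
          _ = ε / 2 + q ^ (M + 1) * C := by
              have hkne : (k : ℝ) ≠ 0 := ne_of_gt hkR
              have halg : ∀ u : ℝ, (((k : ℝ) - 1) * (ε / 2 + u) + ε / 2) / (k : ℝ)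
                  = ε / 2 + q * u := by
                intro u
                rw [hqdef]
                rw [show ((k : ℝ) - 1) * (ε / 2 + u) + ε / 2
                    = ε / 2 * k + ((k : ℝ) - 1) * u from by ring]
                rw [add_div, mul_div_cancel_right₀ _ hkne, div_mul_eq_mul_div]
              rw [halg (q ^ M * C), pow_succ]
              ring
    have hq' : Tendsto (fun M => q ^ M * C) atTop (𝓝 0) := by
      have h := (tendsto_pow_atTop_nhds_zero_of_lt_one hq0 hq1).mul_const C
      simpa using h
    have hev : ∀ᶠ M in atTop, q ^ M * C < ε / 2 :=
      hq'.eventually_lt_const (by positivity)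
    obtain ⟨M, hM⟩ := hev.exists
    obtain ⟨n, hn, gs, hgs⟩ := main M
    exact ⟨n, hn, gs, fun y hy z hz => le_trans (hgs y hy z hz) (by linarith)⟩
  -- Integration of averages against invariant measures.
  have hIntAvg : ∀ (κ : Measure X), IsProbabilityMeasure κ →
      (∀ g : G, Measure.map (fun y => g • y) κ = κ) →
      ∀ (f : C(X, ℝ)) (n : ℕ), 0 < n → ∀ (gs : Fin n → G),
      ∫ x, (∑ j, f (gs j • x)) / (n : ℝ) ∂κ = ∫ x, f x ∂κ := by
    intro κ hκp hκi f n hn gs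
    haveI := hκp
    have hint : ∀ j : Fin n, Integrable (fun x => f (gs j • x)) κ := fun j =>
      aux_integrable_of_continuous κ (f.continuous.comp (hcont (gs j)))
    have h1 : ∫ x, (∑ j, f (gs j • x)) / (n : ℝ) ∂κ
        = (∫ x, (∑ j, f (gs j • x)) ∂κ) / (n : ℝ) := integral_div _ _
    have h2 : ∫ x, (∑ j, f (gs j • x)) ∂κ = ∑ j, ∫ x, f (gs j • x) ∂κ :=
      integral_finset_sum _ (fun j _ => hint j)
    have h3 : ∀ j : Fin n, ∫ x, f (gs j • x) ∂κ = ∫ x, f x ∂κ := by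
      intro j
      conv_rhs => rw [← hκi (gs j)]
      exact (integral_map (hmeas (gs j)).aemeasurable f.continuous.aestronglyMeasurable).symm
    rw [h1, h2]
    simp only [h3, Finset.sum_const, Finset.card_univ, Fintype.card_fin, nsmul_eq_mul]
    field_simp
  -- Uniqueness of invariant probability measures supported on Y.
  have huniq : ∀ (κ₁ κ₂ : Measure X), IsProbabilityMeasure κ₁ → IsProbabilityMeasure κ₂ →
      (∀ g : G, Measure.map (fun y => g • y) κ₁ = κ₁) →
      (∀ g : G, Measure.map (fun y => g • y) κ₂ = κ₂) →
      κ₁ Yᶜ = 0 → κ₂ Yᶜ = 0 → κ₁ = κ₂ := by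
    intro κ₁ κ₂ hp1 hp2 hi1 hi2 hn1 hn2
    haveI := hp1; haveI := hp2
    apply aux_measure_ext
    intro f
    have hbdd : ∀ ε : ℝ, 0 < ε → |∫ x, f x ∂κ₁ - ∫ x, f x ∂κ₂| ≤ 2 * ε := by
      intro ε hε
      obtain ⟨n, hn, gs, hgs⟩ := key f ε hε
      set ψ : X → ℝ := fun x => (∑ j, f (gs j • x)) / (n : ℝ) with hψdef
      have hψc : Continuous ψ :=
        (continuous_finset_sum _ fun j _ => f.continuous.comp (hcont (gs j))).div_const _
      have hir : ∀ (κ : Measure X), IsProbabilityMeasure κ → κ Yᶜ = 0 →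
          |(∫ x, ψ x ∂κ) - ψ x₀| ≤ ε := by
        intro κ hpκ hnκ
        haveI := hpκ
        have hup : ∀ᵐ x ∂κ, ψ x ≤ ψ x₀ + ε := by
          rw [ae_iff]
          apply measure_mono_null _ hnκ
          intro x hx
          simp only [Set.mem_setOf_eq, not_le] at hx
          simp only [Set.mem_compl_iff]
          intro hxY
          have := hgs x hxY x₀ hx₀Y
          linarith
        have hlo : ∀ᵐ x ∂κ, ψ x₀ - ε ≤ ψ x := by
          rw [ae_iff]
          apply measure_mono_null _ hnκ
          intro x hx
          simp only [Set.mem_setOf_eq, not_le] at hx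
          simp only [Set.mem_compl_iff]
          intro hxY
          have := hgs x₀ hx₀Y x hxY
          linarith
        have h1 : ∫ x, ψ x ∂κ ≤ ψ x₀ + ε := by
          have := integral_mono_ae (aux_integrable_of_continuous κ hψc)
            (integrable_const (ψ x₀ + ε)) hup
          simpa using this
        have h2 : ψ x₀ - ε ≤ ∫ x, ψ x ∂κ := by
          have := integral_mono_ae (integrable_const (ψ x₀ - ε))
            (aux_integrable_of_continuous κ hψc) hlo
          simpa using this
        rw [abs_le]; constructor <;> linarith
      have he1 : ∫ x, ψ x ∂κ₁ = ∫ x, f x ∂κ₁ := hIntAvg κ₁ hp1 hi1 f n hn gs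
      have he2 : ∫ x, ψ x ∂κ₂ = ∫ x, f x ∂κ₂ := hIntAvg κ₂ hp2 hi2 f n hn gs
      have hb1 := hir κ₁ hp1 hn1
      have hb2 := hir κ₂ hp2 hn2
      rw [he1] at hb1
      rw [he2] at hb2
      calc |∫ x, f x ∂κ₁ - ∫ x, f x ∂κ₂|
          = |((∫ x, f x ∂κ₁) - ψ x₀) - ((∫ x, f x ∂κ₂) - ψ x₀)| := by ring_nf
        _ ≤ |(∫ x, f x ∂κ₁) - ψ x₀| + |(∫ x, f x ∂κ₂) - ψ x₀| := abs_sub _ _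
        _ ≤ 2 * ε := by linarith
    by_contra hne
    have h3 : 0 < |∫ x, f x ∂κ₁ - ∫ x, f x ∂κ₂| := abs_pos.mpr (sub_ne_zero.mpr hne)
    have h4 := hbdd (|∫ x, f x ∂κ₁ - ∫ x, f x ∂κ₂| / 4) (by positivity)
    linarith
  constructor
  · intro g S hS
    rw [← Measure.map_apply (hmeas g) hS, hmapμ g]
  · intro S hS hSinv
    by_cases h0 : μ S = 0
    · exact Or.inl h0
    · right
      have hc_ne_top : μ S ≠ ⊤ := measure_ne_top μ S
      set κ : Measure X := (μ S)⁻¹ • μ.restrict S with hκdef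
      have hκuniv : κ Set.univ = 1 := by
        rw [hκdef]
        simp only [Measure.smul_apply, Measure.restrict_apply MeasurableSet.univ,
          Set.univ_inter, smul_eq_mul]
        exact ENNReal.inv_mul_cancel h0 hc_ne_top
      haveI hκprob : IsProbabilityMeasure κ := ⟨hκuniv⟩
      have hκinv : ∀ g : G, Measure.map (fun y => g • y) κ = κ := by
        intro g
        apply Measure.ext
        intro A hA
        rw [Measure.map_apply (hmeas g) hA, hκdef]
        simp only [Measure.smul_apply, Measure.restrict_apply hA,
          Measure.restrict_apply ((hmeas g) hA), smul_eq_mul]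
        congr 1
        have hpre : (fun y => g • y) ⁻¹' A ∩ S = (fun y => g • y) ⁻¹' (A ∩ S) := by
          rw [Set.preimage_inter, hSinv g]
        rw [hpre, ← Measure.map_apply (hmeas g) (hA.inter hS), hmapμ g]
      have hκY : κ Yᶜ = 0 := by
        rw [hκdef]
        simp only [Measure.smul_apply, Measure.restrict_apply hYclosed.measurableSet.compl,
          smul_eq_mul]
        rw [measure_mono_null Set.inter_subset_left hμY, mul_zero]
      have heq : κ = μ := huniq κ μ hκprob hμ hκinv hmapμ hκY hμY
      have h5 : κ S = 1 := by
        rw [hκdef]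
        simp only [Measure.smul_apply, Measure.restrict_apply hS, Set.inter_self, smul_eq_mul]
        exact ENNReal.inv_mul_cancel h0 hc_ne_top
      rw [← heq, h5]
end

section
/- Let X be a compact metric space on which the inductive limit K(∞) of an increasing chain of compact groups acts by isometric homeomorphisms. If (x_n) converges in X and μ is a weak limit point of the sequence of orbital measures (μ_n^{x_n}), then μ is an ergodic K(∞)-invariant probability measure. -/
open MeasureTheory Filter Topology

/-- Integrability of bounded a.e.-strongly-measurable functions w.r.t. finite measures. -/
lemma aux_integrable_of_bound {α : Type*} [MeasurableSpace α] (ν : Measure α)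
    [IsFiniteMeasure ν] (f : α → ℝ) (hf : AEStronglyMeasurable f ν) (C : ℝ)
    (hC : ∀ a, |f a| ≤ C) : Integrable f ν := by
  refine (integrable_const C).mono' hf ?_
  exact Filter.Eventually.of_forall (fun a => by simpa using hC a)

/-- Left-invariance of integrals, robust to non-measurability of the integrand. -/
lemma aux_left_invariant_integral {H : Type*} [Group H] [MeasurableSpace H]
    (ν : Measure H) [IsProbabilityMeasure ν]
    (hinv : ∀ c : H, Measure.map (fun g => c * g) ν = ν)
    (c : H) (F : H → ℝ) : ∫ a, F (c * a) ∂ν = ∫ a, F a ∂ν := by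
  have hne : ν ≠ 0 := IsProbabilityMeasure.ne_zero ν
  have hT : ∀ d : H, AEMeasurable (fun g => d * g) ν := by
    intro d
    by_contra h
    exact hne ((hinv d).symm.trans (Measure.map_of_not_aemeasurable h))
  by_cases hF : AEStronglyMeasurable F ν
  · have h1 : AEStronglyMeasurable F (Measure.map (fun g => c * g) ν) := by
      rw [hinv c]; exact hF
    rw [← integral_map (hT c) h1, hinv c]
  · have h2 : ¬ Integrable (fun a => F (c * a)) ν := by
      intro h
      apply hF
      have h3 : AEStronglyMeasurable (fun a => F (c * a))
          (Measure.map (fun g => c⁻¹ * g) ν) := by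
        rw [hinv c⁻¹]; exact h.aestronglyMeasurable
      have h4 := h3.comp_aemeasurable (hT c⁻¹)
      have : ((fun a => F (c * a)) ∘ (fun g => c⁻¹ * g)) = F := by
        funext a; simp [Function.comp, mul_inv_cancel_left]
      rwa [this] at h4
    rw [integral_undef h2, integral_undef (fun h => hF h.aestronglyMeasurable)]

lemma aux_kakutani {E : Type*} [NormedAddCommGroup E] [NormedSpace ℝ E]
    {M : Type*} [Group M] (T : M → E → E)
    (hiso : ∀ c, Isometry (T c))
    (haff : ∀ (c : M) (a b : E) (s t : ℝ), s + t = 1 →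
      T c (s • a + t • b) = s • T c a + t • T c b)
    (hmul : ∀ a b : M, (T a) ∘ (T b) = T (b * a))
    (𝒞 : Set E) (hne : 𝒞.Nonempty) (hcpt : IsCompact 𝒞) (hconv : Convex ℝ 𝒞)
    (hCinv : ∀ c, T c '' 𝒞 ⊆ 𝒞) :
    ∃ F ∈ 𝒞, ∀ c, T c F = F := by
  classical
  set 𝒮 : Set (Set E) :=
    {C | C.Nonempty ∧ IsCompact C ∧ Convex ℝ C ∧ ∀ c, T c '' C ⊆ C} with h𝒮
  have h𝒞mem : 𝒞 ∈ 𝒮 := ⟨hne, hcpt, hconv, hCinv⟩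
  -- Zorn
  have hchain : ∀ c ⊆ 𝒮, IsChain (fun x1 x2 => x1 ⊆ x2) c → c.Nonempty →
      ∃ lb ∈ 𝒮, ∀ s ∈ c, lb ⊆ s := by
    intro ch hch hchain hchne
    haveI : Nonempty ch := hchne.to_subtype
    have hdir : Directed (fun x1 x2 => x1 ⊇ x2) (fun i : ch => (i : Set E)) := by
      intro i j
      rcases hchain.total i.2 j.2 with h | h
      · exact ⟨i, le_refl _, h⟩
      · exact ⟨j, h, le_refl _⟩
    have hlbne : (⋂ i : ch, (i : Set E)).Nonempty := by
      apply IsCompact.nonempty_iInter_of_directed_nonempty_isCompact_isClosed _ hdir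
      · exact fun i => (hch i.2).1
      · exact fun i => (hch i.2).2.1
      · exact fun i => (hch i.2).2.1.isClosed
    refine ⟨⋂ i : ch, (i : Set E), ⟨hlbne, ?_, ?_, ?_⟩, ?_⟩
    · obtain ⟨i⟩ := (inferInstance : Nonempty ch)
      exact IsCompact.of_isClosed_subset (hch i.2).2.1
        (isClosed_iInter fun j => (hch j.2).2.1.isClosed) (Set.iInter_subset _ i)
    · exact convex_iInter fun i => (hch i.2).2.2.1
    · intro c
      refine Set.image_subset_iff.2 (fun w hw => Set.mem_iInter.2 (fun i => ?_))
      exact (hch i.2).2.2.2 c ⟨w, Set.mem_iInter.1 hw i, rfl⟩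
    · exact fun s hs => Set.iInter_subset_of_subset ⟨s, hs⟩ (le_refl _)
  obtain ⟨m, hm𝒞, hmin⟩ := zorn_superset_nonempty 𝒮 hchain 𝒞 h𝒞mem
  obtain ⟨hmne, hmcpt, hmconv, hminv⟩ := hmin.prop
  -- image of m under any T c equals m
  have himg : ∀ c, T c '' m = m := by
    intro c
    have hmem : T c '' m ∈ 𝒮 := by
      refine ⟨hmne.image _, hmcpt.image (hiso c).continuous, ?_, ?_⟩
      · rintro _ ⟨a, ha, rfl⟩ _ ⟨b, hb, rfl⟩ s t hs ht hst
        exact ⟨s • a + t • b, hmconv ha hb hs ht hst, haff c a b s t hst⟩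
      · intro c'
        have h1 : T c' '' (T c '' m) = (T c' ∘ T c) '' m := by
          rw [Set.image_comp]
        have h2 : (T c' ∘ T c) '' m = T (c * c') '' m := by rw [hmul c' c]
        have h3 : T (c * c') '' m ⊆ T c '' m := by
          have h4 : T c ∘ T (c * c' * c⁻¹) = T (c * c' * c⁻¹ * c) := hmul c _
          have h5 : c * c' * c⁻¹ * c = c * c' := by group
          rw [h5] at h4
          rw [← h4, Set.image_comp]
          exact Set.image_mono (hminv _)
        rw [h1, h2]; exact h3
    have hsub : T c '' m ⊆ m := hminv c
    exact Set.Subset.antisymm hsub (hmin.le_of_le hmem hsub)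
  -- m is a subsingleton
  have hsub : ∀ a ∈ m, ∀ b ∈ m, a = b := by
    by_contra hcon
    push_neg at hcon
    obtain ⟨a, ha, b, hb, hab⟩ := hcon
    set d := Metric.diam m with hd
    have hbdd := hmcpt.isBounded
    have hdpos : 0 < d := lt_of_lt_of_le (dist_pos.2 hab)
      (Metric.dist_le_diam_of_mem hbdd ha hb)
    -- finite ball cover with centers in m
    obtain ⟨t, htm, htf, hcover⟩ := hmcpt.elim_finite_subcover_image
      (fun (y : E) (_ : y ∈ m) => Metric.isOpen_ball (x := y) (ε := d/2))
      (fun w hw => Set.mem_iUnion₂.2 ⟨w, hw, Metric.mem_ball_self (by linarith)⟩)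
    set s := htf.toFinset with hs
    have hsm : ∀ p ∈ s, p ∈ m := fun p hp => htm (htf.mem_toFinset.1 hp)
    have hsne : s.Nonempty := by
      obtain ⟨w, hw⟩ := hmne
      have := hcover hw
      rw [Set.mem_iUnion₂] at this
      obtain ⟨p, hp, _⟩ := this
      exact ⟨p, htf.mem_toFinset.2 hp⟩
    set n := s.card with hn
    have hn1 : 1 ≤ n := Finset.card_pos.2 hsne
    have hnR : (1:ℝ) ≤ (n:ℝ) := by exact_mod_cast hn1
    have hnpos : (0:ℝ) < n := by linarith
    set z := (n:ℝ)⁻¹ • ∑ p ∈ s, p with hz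
    have hzm : z ∈ m := by
      have := hmconv.centerMass_mem (t := s) (w := fun _ => (1:ℝ)) (z := id)
        (fun i _ => zero_le_one) (by simpa [hn] using hnpos) (fun i hi => hsm i hi)
      simpa [Finset.centerMass, hz, hn] using this
    set r := d - d/(2*n) with hr
    have hrd : r < d := by
      rw [hr]
      have : 0 < d/(2*(n:ℝ)) := by positivity
      linarith
    have hrnn : 0 ≤ r := by
      rw [hr]
      have h1 : d/(2*(n:ℝ)) ≤ d := div_le_self (le_of_lt hdpos) (by linarith)
      linarith
    -- z is an r-center
    have hzcen : ∀ y ∈ m, dist z y ≤ r := by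
      intro y hy
      have hyc := hcover hy
      rw [Set.mem_iUnion₂] at hyc
      obtain ⟨y₀, hy₀, hyball⟩ := hyc
      have hy₀s : y₀ ∈ s := htf.mem_toFinset.2 hy₀
      have hkey : z - y = (n:ℝ)⁻¹ • ∑ p ∈ s, (p - y) := by
        rw [Finset.sum_sub_distrib, smul_sub, hz]
        congr 1
        rw [Finset.sum_const, ← hn, (Nat.cast_smul_eq_nsmul ℝ _ _).symm, smul_smul]
        rw [inv_mul_cancel₀ (ne_of_gt hnpos), one_smul]
      have hbound : ‖∑ p ∈ s, (p - y)‖ ≤ d/2 + ((n:ℝ) - 1) * d := by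
        calc ‖∑ p ∈ s, (p - y)‖ ≤ ∑ p ∈ s, ‖p - y‖ := norm_sum_le _ _
          _ = ‖y₀ - y‖ + ∑ p ∈ s.erase y₀, ‖p - y‖ := by
              rw [← Finset.add_sum_erase _ _ hy₀s]
          _ ≤ d/2 + ((n:ℝ) - 1) * d := by
              have hA : ‖y₀ - y‖ ≤ d/2 := by
                rw [← dist_eq_norm]
                rw [Metric.mem_ball, dist_comm] at hyball
                exact le_of_lt hyball
              have hB : ∑ p ∈ s.erase y₀, ‖p - y‖ ≤ ((n:ℝ) - 1) * d := by
                have h7 : ∑ p ∈ s.erase y₀, ‖p - y‖ ≤ ∑ _p ∈ s.erase y₀, d := by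
                  apply Finset.sum_le_sum
                  intro p hp
                  rw [← dist_eq_norm]
                  exact Metric.dist_le_diam_of_mem hbdd
                    (hsm p (Finset.mem_of_mem_erase hp)) hy
                have h8 : (∑ _p ∈ s.erase y₀, d) = ((s.erase y₀).card : ℝ) * d := by
                  rw [Finset.sum_const, nsmul_eq_mul]
                have h9 : ((s.erase y₀).card : ℝ) = (n:ℝ) - 1 := by
                  rw [Finset.card_erase_of_mem hy₀s, Nat.cast_sub hn1]
                  simp [hn]
                rw [h8, h9] at h7
                exact h7
              linarith
      calc dist z y = ‖z - y‖ := dist_eq_norm _ _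
        _ = |(n:ℝ)⁻¹| * ‖∑ p ∈ s, (p - y)‖ := by rw [hkey, norm_smul, Real.norm_eq_abs]
        _ = (n:ℝ)⁻¹ * ‖∑ p ∈ s, (p - y)‖ := by rw [abs_of_pos (by positivity)]
        _ ≤ (n:ℝ)⁻¹ * (d/2 + ((n:ℝ) - 1) * d) := by
            apply mul_le_mul_of_nonneg_left hbound (by positivity)
        _ = r := by
            rw [hr]
            field_simp
            try ring
    -- the set of r-centers
    set C₁ := {w ∈ m | ∀ y ∈ m, dist w y ≤ r} with hC₁
    have hC₁sub : C₁ ⊆ m := fun w hw => hw.1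
    have hC₁mem : C₁ ∈ 𝒮 := by
      have hC₁eq : C₁ = m ∩ ⋂ y ∈ m, Metric.closedBall y r := by
        ext w
        simp only [hC₁, Set.mem_setOf_eq, Set.mem_inter_iff, Set.mem_iInter,
          Metric.mem_closedBall]
        try tauto
      refine ⟨⟨z, hzm, hzcen⟩, ?_, ?_, ?_⟩
      · rw [hC₁eq]
        exact IsCompact.of_isClosed_subset hmcpt
          (hmcpt.isClosed.inter (isClosed_biInter fun y _ => Metric.isClosed_closedBall))
          Set.inter_subset_left
      · rw [hC₁eq]
        exact hmconv.inter (convex_iInter₂ fun y _ => convex_closedBall y r)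
      · rintro c _ ⟨w, ⟨hwm, hwc⟩, rfl⟩
        refine ⟨hminv c ⟨w, hwm, rfl⟩, ?_⟩
        intro y hy
        rw [← himg c] at hy
        obtain ⟨y', hy', rfl⟩ := hy
        rw [(hiso c).dist_eq]
        exact hwc y' hy'
    have hmsub : m ⊆ C₁ := hmin.le_of_le hC₁mem hC₁sub
    have : d ≤ r := by
      apply Metric.diam_le_of_forall_dist_le hrnn
      intro w hw y hy
      exact (hmsub hw).2 y hy
    linarith
  obtain ⟨F, hF⟩ := hmne
  exact ⟨F, hm𝒞 hF, fun c => hsub _ (hminv c ⟨F, hF, rfl⟩) _ hF⟩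

/-- The set of translates of a continuous function under isometries is totally bounded. -/
lemma aux_totallyBounded {X : Type*} [MetricSpace X] [CompactSpace X] [Nonempty X]
    {G : Type*} (act : G → C(X, X)) (hiso : ∀ c, Isometry (act c))
    (f : C(X, ℝ)) :
    TotallyBounded (Set.range (fun c : G => f.comp (act c))) := by
  classical
  apply Metric.totallyBounded_iff.2
  intro ε hε
  obtain ⟨δ, hδpos, hδ⟩ := Metric.uniformContinuous_iff.1
    (CompactSpace.uniformContinuous_of_continuous f.continuous) (ε/3) (by linarith)
  -- finite δ-net of X
  obtain ⟨t, -, htf, hcover⟩ := isCompact_univ.elim_finite_subcover_image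
    (fun (p : X) (_ : p ∈ Set.univ) => Metric.isOpen_ball (x := p) (ε := δ))
    (fun w _ => Set.mem_iUnion₂.2 ⟨w, trivial, Metric.mem_ball_self hδpos⟩)
  haveI : Fintype t := htf.fintype
  -- evaluation map on the net
  set Ψ : G → (t → ℝ) := fun c => fun p => f (act c (p : X)) with hΨ
  have hΨtb : TotallyBounded (Set.range Ψ) := by
    refine TotallyBounded.subset ?_
      (IsCompact.totallyBounded (isCompact_univ_pi (fun _ => isCompact_Icc
        (a := -‖f‖) (b := ‖f‖))))
    rintro _ ⟨c, rfl⟩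
    refine Set.mem_univ_pi.2 (fun p => ?_)
    have := ContinuousMap.norm_coe_le_norm f (act c (p : X))
    rw [Real.norm_eq_abs] at this
    exact abs_le.1 this
  obtain ⟨Q₀, hQ₀sub, hQ₀fin, hQ₀cover⟩ := totallyBounded_iff_subset.1 hΨtb
    {pq : (t → ℝ) × (t → ℝ) | dist pq.1 pq.2 < ε/3}
    (Metric.dist_mem_uniformity (by linarith))
  choose rep hrep using fun (q : Q₀) => hQ₀sub q.2
  haveI := hQ₀fin.to_subtype
  refine ⟨(fun q : Q₀ => f.comp (act (rep q))) '' Set.univ,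
    Set.Finite.image _ Set.finite_univ, ?_⟩
  rintro _ ⟨c, rfl⟩
  have hc := hQ₀cover (Set.mem_range_self (f := Ψ) c)
  rw [Set.mem_iUnion₂] at hc
  obtain ⟨q, hq, hcq⟩ := hc
  rw [Set.mem_iUnion₂]
  refine ⟨f.comp (act (rep ⟨q, hq⟩)), ⟨⟨q, hq⟩, Set.mem_univ _, rfl⟩, ?_⟩
  rw [Metric.mem_ball]
  rw [ContinuousMap.dist_lt_iff hε]
  intro y
  have hyc := hcover (Set.mem_univ y)
  rw [Set.mem_iUnion₂] at hyc
  obtain ⟨p, hp, hyp⟩ := hyc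
  have hpt : (⟨p, hp⟩ : t) = (⟨p, hp⟩ : t) := rfl
  have h1 : dist (f (act c y)) (f (act c p)) < ε/3 := by
    apply hδ
    rw [(hiso c).dist_eq]
    exact hyp
  have h2 : dist (f (act c p)) (f (act (rep ⟨q, hq⟩) p)) < ε/3 := by
    have hd := dist_le_pi_dist (Ψ c) (Ψ (rep ⟨q, hq⟩)) ⟨p, hp⟩
    have heq : dist (Ψ c) (Ψ (rep ⟨q, hq⟩)) = dist (Ψ c) q := by rw [hrep ⟨q, hq⟩]
    rw [heq] at hd
    exact lt_of_le_of_lt hd hcq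
  have h3 : dist (f (act (rep ⟨q, hq⟩) p)) (f (act (rep ⟨q, hq⟩) y)) < ε/3 := by
    apply hδ
    rw [(hiso _).dist_eq, dist_comm]
    exact hyp
  calc dist ((f.comp (act c)) y) ((f.comp (act (rep ⟨q, hq⟩))) y)
      ≤ dist (f (act c y)) (f (act c p)) + dist (f (act c p)) (f (act (rep ⟨q, hq⟩) p))
        + dist (f (act (rep ⟨q, hq⟩) p)) (f (act (rep ⟨q, hq⟩) y)) := by
        exact dist_triangle4 _ _ _ _
    _ < ε/3 + ε/3 + ε/3 := by linarith
    _ = ε := by ring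

lemma aux_integrable_of_bound' {α : Type*} [MeasurableSpace α] (ν : Measure α)
    [IsFiniteMeasure ν] (f : α → ℝ) (hf : AEStronglyMeasurable f ν) (C : ℝ)
    (hC : ∀ a, |f a| ≤ C) : Integrable f ν := by
  refine (integrable_const C).mono' hf ?_
  exact Filter.Eventually.of_forall (fun a => by simpa using hC a)

/-- Continuous `[0,1]`-valued approximation of an indicator in the `L²` and `L¹` senses. -/
lemma aux_approx {X : Type*} [MetricSpace X] [CompactSpace X] [MeasurableSpace X] [BorelSpace X]
    (μ : Measure X) [IsProbabilityMeasure μ] (S : Set X) (hS : MeasurableSet S)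
    (ε : ℝ) (hε : 0 < ε) :
    ∃ f : C(X, ℝ), (∀ y, f y ∈ Set.Icc (0:ℝ) 1) ∧
      (∫ y, (Set.indicator S (fun _ => (1:ℝ)) y - f y)^2 ∂μ) ≤ ε ∧
      |(∫ y, f y ∂μ) - (μ S).toReal| ≤ ε := by
  classical
  have hε2 : (ENNReal.ofReal (ε/2)) ≠ 0 := by
    simp [ENNReal.ofReal_eq_zero]
    linarith
  obtain ⟨U, hSU, hUopen, hμU⟩ := S.exists_isOpen_lt_add (μ := μ) (measure_ne_top μ S) hε2
  obtain ⟨C, hCS, hCclosed, hμC⟩ := hS.exists_isClosed_lt_add (measure_ne_top μ S) hε2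
  have hUS : μ (U \ S) < ENNReal.ofReal (ε/2) :=
    measure_diff_lt_of_lt_add hS.nullMeasurableSet hSU (measure_ne_top μ S) hμU
  have hSC : μ (S \ C) < ENNReal.ofReal (ε/2) :=
    measure_diff_lt_of_lt_add hCclosed.measurableSet.nullMeasurableSet hCS
      (measure_ne_top μ C) hμC
  have hUC : μ (U \ C) ≤ ENNReal.ofReal ε := by
    have hsub : U \ C ⊆ (U \ S) ∪ (S \ C) := by
      rintro y ⟨hyU, hyC⟩
      by_cases hyS : y ∈ S
      · exact Or.inr ⟨hyS, hyC⟩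
      · exact Or.inl ⟨hyU, hyS⟩
    calc μ (U \ C) ≤ μ ((U \ S) ∪ (S \ C)) := measure_mono hsub
      _ ≤ μ (U \ S) + μ (S \ C) := measure_union_le _ _
      _ ≤ ENNReal.ofReal (ε/2) + ENNReal.ofReal (ε/2) :=
          add_le_add (le_of_lt hUS) (le_of_lt hSC)
      _ = ENNReal.ofReal ε := by
          rw [← ENNReal.ofReal_add (by linarith) (by linarith)]
          norm_num
  obtain ⟨f, hf0, hf1, hf01⟩ := exists_continuous_zero_one_of_isClosed
    (isClosed_compl_iff.2 hUopen) hCclosed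
    (Set.disjoint_left.2 (fun y hy hyC => hy (hSU (hCS hyC))))
  refine ⟨f, hf01, ?_, ?_⟩
  · -- L² bound
    have hpt : ∀ y, (Set.indicator S (fun _ => (1:ℝ)) y - f y)^2 ≤
        Set.indicator (U \ C) (fun _ => (1:ℝ)) y := by
      intro y
      by_cases hyC : y ∈ C
      · rw [Set.indicator_of_mem (hCS hyC) _, hf1 hyC]
        simp
        by_cases hyUC : y ∈ U \ C
        · rw [Set.indicator_of_mem hyUC]; norm_num
        · rw [Set.indicator_of_notMem hyUC]
      · by_cases hyU : y ∈ U
        · rw [Set.indicator_of_mem ((Set.mem_diff y).2 ⟨hyU, hyC⟩)]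
          have h1 : |Set.indicator S (fun _ => (1:ℝ)) y - f y| ≤ 1 := by
            have hfy := hf01 y
            by_cases hyS : y ∈ S
            · rw [Set.indicator_of_mem hyS]
              rw [abs_le]; constructor <;> [linarith [hfy.2]; linarith [hfy.1]]
            · rw [Set.indicator_of_notMem hyS]
              rw [abs_le]; constructor <;> [linarith [hfy.2]; linarith [hfy.1]]
          calc (Set.indicator S (fun _ => (1:ℝ)) y - f y)^2
              = |Set.indicator S (fun _ => (1:ℝ)) y - f y|^2 := (sq_abs _).symm
            _ ≤ 1^2 := by
                apply pow_le_pow_left₀ (abs_nonneg _) h1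
            _ = 1 := one_pow 2
        · have hyS : y ∉ S := fun h => hyU (hSU h)
          rw [Set.indicator_of_notMem hyS, hf0 (by exact hyU)]
          simp
          by_cases hyUC : y ∈ U \ C
          · rw [Set.indicator_of_mem hyUC]; norm_num
          · rw [Set.indicator_of_notMem hyUC]
    have hmeasUC : MeasurableSet (U \ C) := hUopen.measurableSet.diff
      hCclosed.measurableSet
    have hint1 : Integrable (fun y => (Set.indicator S (fun _ => (1:ℝ)) y - f y)^2) μ := by
      apply aux_integrable_of_bound' μ _ ?_ ((1 + ‖f‖)^2)
      · intro y
        rw [abs_of_nonneg (sq_nonneg _), ← sq_abs]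
        apply pow_le_pow_left₀ ?_ ?_ 2
        · exact abs_nonneg _
        · apply (abs_sub _ _).trans
          gcongr
          · by_cases hyS : y ∈ S
            · rw [Set.indicator_of_mem hyS]; norm_num
            · rw [Set.indicator_of_notMem hyS]; norm_num
          · rw [← Real.norm_eq_abs]
            exact ContinuousMap.norm_coe_le_norm f y
      · apply AEStronglyMeasurable.pow
        apply AEStronglyMeasurable.sub
        · exact (measurable_const.indicator hS).aestronglyMeasurable
        · exact f.continuous.measurable.aestronglyMeasurable
    have hint2 : Integrable (fun y => Set.indicator (U \ C) (fun _ => (1:ℝ)) y) μ :=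
      (integrable_const (1:ℝ)).indicator hmeasUC
    calc ∫ y, (Set.indicator S (fun _ => (1:ℝ)) y - f y)^2 ∂μ
        ≤ ∫ y, Set.indicator (U \ C) (fun _ => (1:ℝ)) y ∂μ :=
          integral_mono hint1 hint2 hpt
      _ = (μ (U \ C)).toReal := by rw [integral_indicator_const _ hmeasUC]; simp [Measure.real]
      _ ≤ ε := ENNReal.toReal_le_of_le_ofReal (le_of_lt hε) hUC
  · -- L¹ bound on the means
    have hindint : Integrable (fun y => Set.indicator S (fun _ => (1:ℝ)) y) μ :=
      (integrable_const (1:ℝ)).indicator hS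
    have hfint : Integrable (fun y => f y) μ :=
      aux_integrable_of_bound' μ _ f.continuous.measurable.aestronglyMeasurable ‖f‖
        (fun y => by rw [← Real.norm_eq_abs]; exact ContinuousMap.norm_coe_le_norm f y)
    have hindeq : ∫ y, Set.indicator S (fun _ => (1:ℝ)) y ∂μ = (μ S).toReal := by
      rw [integral_indicator_const _ hS]; simp [Measure.real]
    rw [← hindeq, ← integral_sub hfint hindint]
    have hptabs : ∀ y, |f y - Set.indicator S (fun _ => (1:ℝ)) y| ≤
        Set.indicator (U \ C) (fun _ => (1:ℝ)) y := by
      intro y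
      by_cases hyC : y ∈ C
      · rw [Set.indicator_of_mem (hCS hyC) _, hf1 hyC]
        simp only [Pi.one_apply, sub_self, abs_zero]
        by_cases hyUC : y ∈ U \ C
        · rw [Set.indicator_of_mem hyUC]; norm_num
        · rw [Set.indicator_of_notMem hyUC]
      · by_cases hyU : y ∈ U
        · rw [Set.indicator_of_mem ((Set.mem_diff y).2 ⟨hyU, hyC⟩)]
          have hfy := hf01 y
          by_cases hyS : y ∈ S
          · rw [Set.indicator_of_mem hyS]
            rw [abs_le]; constructor <;> [linarith [hfy.1]; linarith [hfy.2]]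
          · rw [Set.indicator_of_notMem hyS]
            rw [abs_le]; constructor <;> [linarith [hfy.1]; linarith [hfy.2]]
        · have hyS : y ∉ S := fun h => hyU (hSU h)
          rw [Set.indicator_of_notMem hyS, hf0 (by exact hyU)]
          simp only [Pi.zero_apply, sub_zero, abs_zero]
          by_cases hyUC : y ∈ U \ C
          · rw [Set.indicator_of_mem hyUC]; norm_num
          · rw [Set.indicator_of_notMem hyUC]
    have hmeasUC : MeasurableSet (U \ C) := hUopen.measurableSet.diff
      hCclosed.measurableSet
    calc |∫ y, (f y - Set.indicator S (fun _ => (1:ℝ)) y) ∂μ|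
        ≤ ∫ y, |f y - Set.indicator S (fun _ => (1:ℝ)) y| ∂μ := by
          rw [← Real.norm_eq_abs]
          apply (norm_integral_le_integral_norm _).trans
          apply le_of_eq
          congr
      _ ≤ ∫ y, Set.indicator (U \ C) (fun _ => (1:ℝ)) y ∂μ := by
          apply integral_mono (hfint.sub hindint).abs
            ((integrable_const (1:ℝ)).indicator hmeasUC) hptabs
      _ = (μ (U \ C)).toReal := by rw [integral_indicator_const _ hmeasUC]; simp [Measure.real]
      _ ≤ ε := ENNReal.toReal_le_of_le_ofReal (le_of_lt hε) hUC

set_option maxHeartbeats 1000000 in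
/-- Let the union `K(∞) = ⋃ K n` of an increasing chain of compact subgroups act
by isometric homeomorphisms on a compact metric space `X`. If `(x n)` converges in `X` and `μ`
is a weak limit point of the orbital measures `μ_n^{x n}`, then `μ` is a `K(∞)`-invariant
ergodic probability measure. -/
theorem weak_limit_point_along_convergent_points_ergodic
    {G X : Type*} [Group G] [TopologicalSpace G] [IsTopologicalGroup G] [MeasurableSpace G]
    [MetricSpace X] [CompactSpace X] [MeasurableSpace X] [BorelSpace X] [MulAction G X]
    (hiso : ∀ g : G, Isometry (fun x : X => g • x))
    (K : ℕ → Subgroup G) (hmono : Monotone K)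
    (hcpt : ∀ n, IsCompact ((K n : Set G)))
    (hunion : ∀ g : G, ∃ n, g ∈ K n)
    (m : ∀ n, Measure (K n)) (hprob : ∀ n, IsProbabilityMeasure (m n))
    (hhaar : ∀ n (h : K n), Measure.map (fun g => h * g) (m n) = m n)
    (x : ℕ → X) (hx : ∃ x₀ : X, Tendsto x atTop (𝓝 x₀))
    (μ : Measure X) (hμ : IsProbabilityMeasure μ)
    (φ : ℕ → ℕ) (hφ : StrictMono φ)
    (hconv : ∀ f : C(X, ℝ),
      Tendsto (fun i => ∫ g : K (φ i), f ((g : G) • x (φ i)) ∂(m (φ i))) atTop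
        (𝓝 (∫ y, f y ∂μ))) :
    (∀ (g : G) (S : Set X), MeasurableSet S → μ ((fun y => g • y) ⁻¹' S) = μ S) ∧
      (∀ S : Set X, MeasurableSet S → (∀ g : G, (fun y => g • y) ⁻¹' S = S) →
        μ S = 0 ∨ μ S = 1) := by
  classical
  obtain ⟨x₀, hx₀⟩ := hx
  haveI : Nonempty X := ⟨x₀⟩
  have hcont : ∀ c : G, Continuous (fun y : X => c • y) := fun c => (hiso c).continuous
  have hmeas : ∀ c : G, Measurable (fun y : X => c • y) := fun c => (hcont c).measurable
  -- Step 1: invariance of integrals of continuous functions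
  have key : ∀ (f : C(X,ℝ)) (g : G), ∫ y, f (g • y) ∂μ = ∫ y, f y ∂μ := by
    intro f g
    obtain ⟨n₀, hg⟩ := hunion g
    set f' : C(X,ℝ) := ⟨fun y => f (g • y), f.continuous.comp (hcont g)⟩ with hf'
    have h1 := hconv f
    have h2 := hconv f'
    have heq : ∀ i, n₀ ≤ i →
        (∫ a : K (φ i), f' ((a:G) • x (φ i)) ∂(m (φ i))) =
        (∫ a : K (φ i), f ((a:G) • x (φ i)) ∂(m (φ i))) := by
      intro i hi
      have hgK : g ∈ K (φ i) := hmono (le_trans hi hφ.le_apply) hg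
      haveI := hprob (φ i)
      have hLI := aux_left_invariant_integral (m (φ i)) (hhaar (φ i)) ⟨g, hgK⟩
        (fun a => f ((a:G) • x (φ i)))
      rw [← hLI]
      congr 1
      funext a
      show f (g • ((a:G) • x (φ i))) = f ((((⟨g, hgK⟩ : K (φ i)) * a : K (φ i)) : G) • x (φ i))
      rw [Subgroup.coe_mul, mul_smul]
    have h2' : Tendsto (fun i => ∫ a : K (φ i), f ((a:G) • x (φ i)) ∂(m (φ i))) atTop
        (𝓝 (∫ y, f' y ∂μ)) := by
      apply h2.congr'
      filter_upwards [eventually_atTop.2 ⟨n₀, fun i hi => heq i hi⟩] with i hi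
      exact hi
    have := tendsto_nhds_unique h2' h1
    simpa [hf'] using this
  -- Step 2: invariance of the measure
  have hmap : ∀ g : G, Measure.map (fun y => g • y) μ = μ := by
    intro g
    haveI : IsProbabilityMeasure (Measure.map (fun y => g • y) μ) :=
      Measure.isProbabilityMeasure_map (hmeas g).aemeasurable
    apply MeasureTheory.ext_of_forall_lintegral_eq_of_IsFiniteMeasure
    intro f
    rw [lintegral_map (f.continuous.measurable.coe_nnreal_ennreal) (hmeas g)]
    have hbnd : ∀ y : X, |((f y : ℝ))| ≤ dist f 0 := by
      intro y
      rw [abs_of_nonneg (f y).coe_nonneg]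
      have h0 := BoundedContinuousFunction.dist_coe_le_dist (f := f)
        (g := (0 : BoundedContinuousFunction X NNReal)) y
      calc ((f y : ℝ)) = dist (f y) ((0 : BoundedContinuousFunction X NNReal) y) := by
            simp [NNReal.dist_eq]
        _ ≤ dist f 0 := h0
    have hint1 : Integrable (fun y => ((f y : ℝ))) μ :=
      aux_integrable_of_bound μ _
        (NNReal.continuous_coe.comp f.continuous).measurable.aestronglyMeasurable (dist f 0)
        hbnd
    have hint2 : Integrable (fun y => ((f (g • y) : ℝ))) μ :=
      aux_integrable_of_bound μ _
        ((NNReal.continuous_coe.comp f.continuous).comp (hcont g)).measurable.aestronglyMeasurable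
        (dist f 0) (fun y => hbnd (g • y))
    rw [lintegral_coe_eq_integral _ hint1, lintegral_coe_eq_integral
      (fun y => f (g • y)) hint2]
    congr 1
    set fc : C(X, ℝ) := ⟨fun y => (f y : ℝ), NNReal.continuous_coe.comp f.continuous⟩
    exact key fc g
  have part1 : ∀ (g : G) (S : Set X), MeasurableSet S →
      μ ((fun y => g • y) ⁻¹' S) = μ S := by
    intro g S hS
    conv_rhs => rw [← hmap g]
    rw [Measure.map_apply (hmeas g) hS]
  refine ⟨part1, ?_⟩
  intro S hS hSinv
  set ind : X → ℝ := Set.indicator S (fun _ => (1:ℝ)) with hind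
  have hindmeas : Measurable ind := measurable_const.indicator hS
  have hmem : ∀ (c : G) (y : X), (c • y ∈ S) ↔ (y ∈ S) := by
    intro c y
    conv_rhs => rw [← hSinv c]
    exact Iff.rfl
  have hindinv : ∀ (c : G) (y : X), ind (c • y) = ind y := by
    intro c y
    by_cases hy : y ∈ S
    · rw [hind, Set.indicator_of_mem ((hmem c y).2 hy), Set.indicator_of_mem hy]
    · rw [hind, Set.indicator_of_notMem (fun h => hy ((hmem c y).1 h)),
        Set.indicator_of_notMem hy]
  have hindbd : ∀ y, |ind y| ≤ 1 := by
    intro y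
    by_cases hyS : y ∈ S
    · rw [hind, Set.indicator_of_mem hyS]; norm_num
    · rw [hind, Set.indicator_of_notMem hyS]; norm_num
  set p := (μ S).toReal with hp
  have hp0 : 0 ≤ p := ENNReal.toReal_nonneg
  have hp1 : p ≤ 1 := by
    have h1 : μ S ≤ 1 := prob_le_one
    have := ENNReal.toReal_mono (by simp) h1
    simpa using this
  -- main quantitative estimate
  have hmain : ∀ ε : ℝ, 0 < ε → ε ≤ 1 → p - p^2 ≤ 21 * ε := by
    intro ε hε hε1
    obtain ⟨f, hf01, hfL2, hfL1⟩ := aux_approx μ S hS ε hε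
    rw [← hind] at hfL2
    -- translation operators on C(X, ℝ)
    set σ : G → C(X, X) := fun c => ⟨fun y => c • y, hcont c⟩ with hσ
    set T : G → C(X,ℝ) → C(X,ℝ) := fun c F => F.comp (σ c) with hT
    have hTapp : ∀ (c : G) (F : C(X,ℝ)) (y : X), T c F y = F (c • y) := fun c F y => rfl
    have hTiso : ∀ c, Isometry (T c) := by
      intro c
      apply Isometry.of_dist_eq
      intro F H
      apply le_antisymm
      · rw [ContinuousMap.dist_le dist_nonneg]
        intro y
        exact ContinuousMap.dist_apply_le_dist (c • y)
      · rw [ContinuousMap.dist_le dist_nonneg]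
        intro y
        have h1 := ContinuousMap.dist_apply_le_dist (f := T c F) (g := T c H) (c⁻¹ • y)
        rw [hTapp, hTapp, smul_inv_smul] at h1
        exact h1
    have hTaff : ∀ (c : G) (a b : C(X,ℝ)) (s t : ℝ), s + t = 1 →
        T c (s • a + t • b) = s • T c a + t • T c b := by
      intro c a b s t _
      ext y
      simp [hTapp]
    have hTmul : ∀ a b : G, (T a) ∘ (T b) = T (b * a) := by
      intro a b
      funext F
      ext y
      simp only [Function.comp_apply, hTapp, mul_smul]
    set 𝒯 : Set C(X,ℝ) := Set.range (fun c : G => T c f) with h𝒯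
    have hTB : TotallyBounded 𝒯 := aux_totallyBounded σ hiso f
    set 𝒞 : Set C(X,ℝ) := closure (convexHull ℝ 𝒯) with h𝒞
    have h𝒞cpt : IsCompact 𝒞 := TotallyBounded.isCompact_of_isClosed
      ((totallyBounded_convexHull.2 hTB).closure) isClosed_closure
    have h𝒞ne : 𝒞.Nonempty := ⟨T 1 f, subset_closure (subset_convexHull ℝ _ ⟨1, rfl⟩)⟩
    have h𝒞conv : Convex ℝ 𝒞 := (convex_convexHull ℝ 𝒯).closure
    have h𝒯inv : ∀ c, T c '' 𝒯 ⊆ 𝒯 := by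
      rintro c _ ⟨_, ⟨c', rfl⟩, rfl⟩
      exact ⟨c' * c, (congrFun (hTmul c c') f).symm⟩
    have h𝒞inv : ∀ c, T c '' 𝒞 ⊆ 𝒞 := by
      intro c
      have hlin : T c '' (convexHull ℝ 𝒯) ⊆ convexHull ℝ 𝒯 := by
        have hL : T c '' (convexHull ℝ 𝒯)
            = (ContinuousMap.compRightAlgHom ℝ ℝ (σ c)).toLinearMap '' (convexHull ℝ 𝒯) := rfl
        rw [hL, LinearMap.image_convexHull]
        apply convexHull_mono
        exact h𝒯inv c
      calc T c '' 𝒞 ⊆ closure (T c '' (convexHull ℝ 𝒯)) :=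
            image_closure_subset_closure_image (hTiso c).continuous
        _ ⊆ 𝒞 := closure_mono hlin
    obtain ⟨Fs, hFs𝒞, hFsinv⟩ := aux_kakutani T hTiso hTaff hTmul 𝒞 h𝒞ne h𝒞cpt h𝒞conv h𝒞inv
    have hFpt : ∀ (c : G) (y : X), Fs (c • y) = Fs y := by
      intro c y
      have h1 := congrArg (fun (F : C(X,ℝ)) => F y) (hFsinv c)
      simpa [hTapp] using h1
    have hContInt : ∀ (F : C(X,ℝ)), Integrable (fun y => F y) μ := fun F =>
      aux_integrable_of_bound μ _ F.continuous.measurable.aestronglyMeasurable ‖F‖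
        (fun y => by rw [← Real.norm_eq_abs]; exact F.norm_coe_le_norm y)
    -- every element of 𝒞 has the same integral as f
    have hμ𝒞 : ∀ F ∈ 𝒞, ∫ y, F y ∂μ = ∫ y, f y ∂μ := by
      have hW : 𝒞 ⊆ {F : C(X,ℝ) | ∫ y, F y ∂μ = ∫ y, f y ∂μ} := by
        apply closure_minimal
        · apply convexHull_min
          · rintro _ ⟨c, rfl⟩
            exact key f c
          · intro F hF H hH s t hs ht hst
            simp only [Set.mem_setOf_eq] at *
            have h2 : ∫ y, (s • F + t • H) y ∂μ = s * ∫ y, F y ∂μ + t * ∫ y, H y ∂μ := by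
              simp only [ContinuousMap.add_apply, ContinuousMap.smul_apply, smul_eq_mul]
              rw [integral_add ((hContInt F).const_mul s) ((hContInt H).const_mul t),
                integral_const_mul, integral_const_mul]
            rw [h2, hF, hH, ← add_mul, hst, one_mul]
        · have hcontI : Continuous (fun F : C(X,ℝ) => ∫ y, F y ∂μ) := by
            apply LipschitzWith.continuous (K := 1)
            apply LipschitzWith.of_dist_le_mul
            intro F H
            rw [NNReal.coe_one, one_mul, Real.dist_eq, ← integral_sub (hContInt F) (hContInt H)]
            have h1 : |∫ y, (F y - H y) ∂μ| ≤ ∫ y, |F y - H y| ∂μ := by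
              have h0 := norm_integral_le_integral_norm (μ := μ) (f := fun y => F y - H y)
              simpa [Real.norm_eq_abs] using h0
            have h2 : ∫ y, |F y - H y| ∂μ ≤ ∫ _y, dist F H ∂μ := by
              apply integral_mono ((hContInt F).sub (hContInt H)).abs (integrable_const _)
              intro y
              have h3 := ContinuousMap.dist_apply_le_dist (f := F) (g := H) y
              rw [Real.dist_eq] at h3
              exact h3
            have h4 : ∫ _y, dist F H ∂μ = dist F H := by simp
            linarith
          exact isClosed_eq hcontI continuous_const
      exact fun F hF => hW hF
    -- orbital integrals of invariant functions collapse
    have hinvInt : ∀ (F : C(X,ℝ)), (∀ (c : G) (y : X), F (c • y) = F y) →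
        ∫ y, F y ∂μ = F x₀ := by
      intro F hFinv
      have h1 := hconv F
      have h2 : (fun i => ∫ a : K (φ i), F ((a:G) • x (φ i)) ∂(m (φ i)))
          = fun i => F (x (φ i)) := by
        funext i
        have h3 : (fun a : K (φ i) => F ((a:G) • x (φ i))) = fun _ => F (x (φ i)) :=
          funext fun a => hFinv _ _
        rw [h3]
        haveI := hprob (φ i)
        simp
      rw [h2] at h1
      have h3 : Tendsto (fun i => F (x (φ i))) atTop (𝓝 (F x₀)) :=
        (F.continuous.tendsto x₀).comp (hx₀.comp hφ.tendsto_atTop)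
      exact tendsto_nhds_unique h1 h3
    set c₀ := Fs x₀ with hc₀
    have hFsint : ∫ y, Fs y ∂μ = c₀ := hinvInt Fs hFpt
    have hFs2int : ∫ y, Fs y * Fs y ∂μ = c₀ * c₀ := by
      have h1 := hinvInt (Fs * Fs) (fun c y => by
        show Fs (c • y) * Fs (c • y) = Fs y * Fs y
        rw [hFpt c y])
      simpa using h1
    have hc₀f : c₀ = ∫ y, f y ∂μ := by rw [← hFsint]; exact hμ𝒞 Fs hFs𝒞
    have hint2 : Integrable (fun y => Fs y * Fs y) μ := by
      have h1 : (fun y => Fs y * Fs y) = fun y => (Fs * Fs) y := by funext y; simp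
      rw [h1]; exact hContInt (Fs * Fs)
    have hint3 : Integrable (fun y => (-(2*c₀)) * Fs y) μ := (hContInt Fs).const_mul _
    have hvar : ∫ y, (Fs y - c₀)^2 ∂μ = 0 := by
      calc ∫ y, (Fs y - c₀)^2 ∂μ
          = ∫ y, ((Fs y * Fs y) + ((-(2*c₀)) * Fs y + c₀^2)) ∂μ := by
            congr 1; funext y; ring
        _ = (∫ y, Fs y * Fs y ∂μ) + (∫ y, ((-(2*c₀)) * Fs y + c₀^2) ∂μ) :=
            integral_add hint2 (hint3.add (integrable_const _))
        _ = (∫ y, Fs y * Fs y ∂μ) + ((∫ y, (-(2*c₀)) * Fs y ∂μ) + ∫ _y, (c₀^2 : ℝ) ∂μ) := by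
            congr 1
            exact integral_add hint3 (integrable_const _)
        _ = c₀*c₀ + ((-(2*c₀)) * c₀ + c₀^2) := by
            rw [hFs2int, integral_const_mul, hFsint, integral_const]
            simp
        _ = 0 := by ring
    -- uniform bound 1 on 𝒞
    have hball : 𝒞 ⊆ Metric.closedBall 0 1 := by
      apply closure_minimal
      · apply convexHull_min
        · rintro _ ⟨c, rfl⟩
          rw [Metric.mem_closedBall, dist_zero_right]
          rw [ContinuousMap.norm_le _ zero_le_one]
          intro y
          rw [Real.norm_eq_abs, hTapp]
          have h1 := hf01 (c • y)
          rw [abs_le]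
          exact ⟨by linarith [h1.1], h1.2⟩
        · exact convex_closedBall 0 1
      · exact Metric.isClosed_closedBall
    have habs : ∀ F ∈ 𝒞, ∀ y, |F y| ≤ 1 := by
      intro F hF y
      have h1 := hball hF
      rw [Metric.mem_closedBall, dist_zero_right] at h1
      rw [← Real.norm_eq_abs]
      exact (F.norm_coe_le_norm y).trans h1
    -- integrability of squared differences
    have hintz : ∀ (H : C(X,ℝ)), Integrable (fun y => (ind y - H y)^2) μ := by
      intro H
      apply aux_integrable_of_bound μ _
        ((hindmeas.sub H.continuous.measurable).pow_const 2).aestronglyMeasurable ((1 + ‖H‖)^2)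
      intro y
      rw [abs_of_nonneg (sq_nonneg _), ← sq_abs]
      apply pow_le_pow_left₀ (abs_nonneg _) ?_ 2
      apply (abs_sub _ _).trans
      gcongr
      · exact hindbd y
      · rw [← Real.norm_eq_abs]; exact H.norm_coe_le_norm y
    -- hull estimate
    have hhull : ∀ F ∈ convexHull ℝ 𝒯, ∫ y, (ind y - F y)^2 ∂μ ≤ ε := by
      intro F hF
      rw [convexHull_eq] at hF
      obtain ⟨ι, tt, w, z, hw0, hw1, hzmem, rfl⟩ := hF
      have hpt : ∀ y, (ind y - (tt.centerMass w z) y)^2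
          ≤ ∑ i ∈ tt, w i * (ind y - z i y)^2 := by
        intro y
        have hcm : (tt.centerMass w z) y = ∑ i ∈ tt, w i * z i y := by
          rw [Finset.centerMass_eq_of_sum_1 _ _ hw1, ContinuousMap.sum_apply]
          simp
        have hiy : ind y - (tt.centerMass w z) y = ∑ i ∈ tt, w i • (ind y - z i y) := by
          rw [hcm]
          simp only [smul_eq_mul, mul_sub]
          rw [Finset.sum_sub_distrib, ← Finset.sum_mul, hw1, one_mul]
        rw [hiy]
        have hJ := (Even.convexOn_pow (even_two)).map_sum_le (f := fun u : ℝ => u^2)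
          hw0 hw1 (fun i _ => Set.mem_univ (ind y - z i y))
        simpa [smul_eq_mul] using hJ
      have hsum_int : Integrable (fun y => ∑ i ∈ tt, w i * (ind y - z i y)^2) μ :=
        integrable_finset_sum _ (fun i _ => (hintz (z i)).const_mul (w i))
      calc ∫ y, (ind y - (tt.centerMass w z) y)^2 ∂μ
          ≤ ∫ y, ∑ i ∈ tt, w i * (ind y - z i y)^2 ∂μ :=
            integral_mono (hintz _) hsum_int hpt
        _ = ∑ i ∈ tt, ∫ y, w i * (ind y - z i y)^2 ∂μ :=
            integral_finset_sum _ (fun i _ => (hintz (z i)).const_mul (w i))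
        _ = ∑ i ∈ tt, w i * ∫ y, (ind y - z i y)^2 ∂μ :=
            Finset.sum_congr rfl (fun i _ => integral_const_mul _ _)
        _ ≤ ∑ i ∈ tt, w i * ε := by
            apply Finset.sum_le_sum
            intro i hi
            apply mul_le_mul_of_nonneg_left ?_ (hw0 i hi)
            obtain ⟨ci, hci⟩ := hzmem i hi
            rw [← hci]
            have hH : AEStronglyMeasurable (fun u => (ind u - f u)^2) μ :=
              ((hindmeas.sub f.continuous.measurable).pow_const 2).aestronglyMeasurable
            calc ∫ y, (ind y - (T ci f) y)^2 ∂μ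
                = ∫ y, (fun u => (ind u - f u)^2) (ci • y) ∂μ := by
                  congr 1; funext y
                  rw [hTapp, ← hindinv ci y]
              _ = ∫ u, (ind u - f u)^2 ∂μ := by
                  conv_rhs => rw [← hmap ci]
                  rw [integral_map (hmeas ci).aemeasurable
                    (by rw [hmap ci]; exact hH)]
              _ ≤ ε := hfL2
        _ = ε := by rw [← Finset.sum_mul, hw1, one_mul]
    -- pass to the closure element Fs
    obtain ⟨Fc, hFc, hFcd⟩ := Metric.mem_closure_iff.1 hFs𝒞 ε hε
    have hT1 : ∫ y, (ind y - Fs y)^2 ∂μ ≤ 6 * ε := by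
      have hptw : ∀ y, (ind y - Fs y)^2 ≤ (ind y - Fc y)^2 + 5*ε := by
        intro y
        have hb : |Fc y - Fs y| ≤ ε := by
          have h1 : dist (Fc y) (Fs y) ≤ dist Fc Fs := ContinuousMap.dist_apply_le_dist y
          rw [Real.dist_eq] at h1
          calc |Fc y - Fs y| ≤ dist Fc Fs := h1
            _ = dist Fs Fc := dist_comm _ _
            _ ≤ ε := le_of_lt hFcd
        have ha : |ind y - Fc y| ≤ 2 := by
          have h1 : |Fc y| ≤ 1 := habs Fc (subset_closure hFc) y
          calc |ind y - Fc y| ≤ |ind y| + |Fc y| := abs_sub _ _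
            _ ≤ 2 := by linarith [hindbd y]
        have hAB : (ind y - Fc y) * (Fc y - Fs y) ≤ 2 * ε := by
          calc (ind y - Fc y) * (Fc y - Fs y)
              ≤ |(ind y - Fc y) * (Fc y - Fs y)| := le_abs_self _
            _ = |ind y - Fc y| * |Fc y - Fs y| := abs_mul _ _
            _ ≤ 2 * ε := mul_le_mul ha hb (abs_nonneg _) (by norm_num)
        have hB2 : (Fc y - Fs y)^2 ≤ ε := by
          have h1 : (Fc y - Fs y)^2 ≤ ε^2 := by
            rw [← sq_abs]
            apply pow_le_pow_left₀ (abs_nonneg _) hb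
          nlinarith
        have hexp : (ind y - Fs y)^2 = (ind y - Fc y)^2
            + (2*((ind y - Fc y) * (Fc y - Fs y)) + (Fc y - Fs y)^2) := by ring
        rw [hexp]
        linarith
      calc ∫ y, (ind y - Fs y)^2 ∂μ ≤ ∫ y, ((ind y - Fc y)^2 + 5*ε) ∂μ :=
            integral_mono (hintz Fs) ((hintz Fc).add (integrable_const _)) hptw
        _ = (∫ y, (ind y - Fc y)^2 ∂μ) + 5*ε := by
            rw [integral_add (hintz Fc) (integrable_const _), integral_const]
            simp
        _ ≤ ε + 5*ε := by linarith [hhull Fc hFc]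
        _ = 6*ε := by ring
    -- |c₀ - p| ≤ ε
    have hc₀p : |c₀ - p| ≤ ε := by
      rw [hc₀f, hp]
      exact hfL1
    -- p - p² as an integral
    have hpint : ∫ y, ind y ∂μ = p := by
      rw [hind, integral_indicator_const _ hS]
      simp [hp, Measure.real]
    have hindint : Integrable ind μ :=
      aux_integrable_of_bound μ _ hindmeas.aestronglyMeasurable 1 hindbd
    have hvarind : ∫ y, (ind y - p)^2 ∂μ = p - p^2 := by
      have hindsq : ∀ y, (ind y - p)^2 = (1 - 2*p) * ind y + p^2 := by
        intro y
        by_cases hyS : y ∈ S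
        · rw [hind, Set.indicator_of_mem hyS]
          ring
        · rw [hind, Set.indicator_of_notMem hyS]
          ring
      calc ∫ y, (ind y - p)^2 ∂μ = ∫ y, ((1 - 2*p) * ind y + p^2) ∂μ := by
            congr 1; funext y; exact hindsq y
        _ = (∫ y, (1 - 2*p) * ind y ∂μ) + ∫ _y, (p^2 : ℝ) ∂μ :=
            integral_add (hindint.const_mul _) (integrable_const _)
        _ = (1 - 2*p) * p + p^2 := by
            rw [integral_const_mul, hpint, integral_const]
            simp
        _ = p - p^2 := by ring
    have hsplit : ∀ y, (ind y - p)^2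
        ≤ 3*(ind y - Fs y)^2 + 3*(Fs y - c₀)^2 + 3*(c₀ - p)^2 := by
      intro y
      nlinarith [sq_nonneg ((ind y - Fs y) - (Fs y - c₀)), sq_nonneg ((Fs y - c₀) - (c₀ - p)),
        sq_nonneg ((ind y - Fs y) - (c₀ - p))]
    have hintFs : Integrable (fun y => (Fs y - c₀)^2) μ := by
      apply aux_integrable_of_bound μ _
        ((Fs.continuous.measurable.sub measurable_const).pow_const 2).aestronglyMeasurable
        ((‖Fs‖ + |c₀|)^2)
      intro y
      rw [abs_of_nonneg (sq_nonneg _), ← sq_abs]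
      apply pow_le_pow_left₀ (abs_nonneg _) ?_ 2
      apply (abs_sub _ _).trans
      gcongr
      rw [← Real.norm_eq_abs]
      exact Fs.norm_coe_le_norm y
    have hintind2 : Integrable (fun y => (ind y - p)^2) μ := by
      apply aux_integrable_of_bound μ _
        ((hindmeas.sub measurable_const).pow_const 2).aestronglyMeasurable ((1 + |p|)^2)
      intro y
      rw [abs_of_nonneg (sq_nonneg _), ← sq_abs]
      apply pow_le_pow_left₀ (abs_nonneg _) ?_ 2
      apply (abs_sub _ _).trans
      gcongr
      exact hindbd y
    have hintindFs : Integrable (fun y => (ind y - Fs y)^2) μ := hintz Fs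
    have hfinal : p - p^2 ≤ 3*(6*ε) + 3*0 + 3*ε^2 := by
      calc p - p^2 = ∫ y, (ind y - p)^2 ∂μ := hvarind.symm
        _ ≤ ∫ y, (3*(ind y - Fs y)^2 + 3*(Fs y - c₀)^2 + 3*(c₀ - p)^2) ∂μ := by
            apply integral_mono hintind2 ?_ hsplit
            exact ((hintindFs.const_mul 3).add (hintFs.const_mul 3)).add (integrable_const _)
        _ = (∫ y, (3*(ind y - Fs y)^2 + 3*(Fs y - c₀)^2) ∂μ) + ∫ _y, (3*(c₀-p)^2 : ℝ) ∂μ :=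
            integral_add ((hintindFs.const_mul 3).add (hintFs.const_mul 3))
              (integrable_const _)
        _ = ((∫ y, 3*(ind y - Fs y)^2 ∂μ) + ∫ y, 3*(Fs y - c₀)^2 ∂μ)
            + ∫ _y, (3*(c₀-p)^2 : ℝ) ∂μ := by
            congr 1
            exact integral_add (hintindFs.const_mul 3) (hintFs.const_mul 3)
        _ = 3*(∫ y, (ind y - Fs y)^2 ∂μ) + 3*(∫ y, (Fs y - c₀)^2 ∂μ) + 3*(c₀-p)^2 := by
            rw [integral_const_mul, integral_const_mul, integral_const]
            simp
        _ ≤ 3*(6*ε) + 3*0 + 3*ε^2 := by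
            have h3 : (c₀ - p)^2 ≤ ε^2 := by
              rw [← sq_abs]
              apply pow_le_pow_left₀ (abs_nonneg _) hc₀p
            have h4 := hvar
            linarith [hT1]
    nlinarith [hfinal, hε.le, hε1]
  -- conclusion
  have hple : p - p^2 ≤ 0 := by
    by_contra hcon
    push_neg at hcon
    have hd2 : 0 < (p - p^2)/42 := by linarith
    set ε := min 1 ((p - p^2)/42) with hεdef
    have hεpos : 0 < ε := lt_min one_pos hd2
    have hε1 : ε ≤ 1 := min_le_left _ _
    have h1 := hmain ε hεpos hε1
    have h2 : (21:ℝ) * ε ≤ (p - p^2)/2 := by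
      have h3 := min_le_right 1 ((p - p^2)/42)
      calc (21:ℝ) * ε ≤ 21 * ((p - p^2)/42) := by
            apply mul_le_mul_of_nonneg_left h3 (by norm_num)
        _ = (p - p^2)/2 := by ring
    linarith
  have hpp : p * (1 - p) = 0 := by nlinarith
  rcases mul_eq_zero.1 hpp with h | h
  · left
    rcases (ENNReal.toReal_eq_zero_iff _).1 h with h' | h'
    · exact h'
    · exact absurd h' (measure_ne_top μ S)
  · right
    have hp1' : p = 1 := by linarith
    exact (ENNReal.toReal_eq_one_iff _).1 hp1'
end

section
/- For each n, let x_n be the element of X = {0,1}^{K(∞)} (K(∞) the Prüfer 2-group with chain K(n) = ℤ/2ⁿℤ) constructed so that x_n restricted to K(n) is the indicator function of K(n−1), and x_n restricted to each successive nontrivial coset g_m + K(m) (m ≥ n) is the translate of x_n|_{K(m)} by g_m. Then the K(n)-orbit of x_n under the translation action consists of exactly two points: x_n and 1 − x_n. -/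
open scoped Classical

/-- Let `G = K(∞) = ⋃ K n` be the union of an increasing chain of subgroups with
`K n ≅ ℤ/2ⁿℤ` (so `Nat.card (K n) = 2 ^ n`), and pick `gs m ∈ K (m+1) \ K m`. Let
`x : G → ZMod 2` be the configuration constructed in the paper: on `K n` it is the indicator
of `K (n-1)`, and on each nontrivial coset `gs m + K m` (for `m ≥ n`) it is the translate of
its restriction to `K m`. Then the `K n`-orbit of `x` under the translation action
`(h • x)(a) = x (a - h)` consists of exactly the two points `x` and `1 - x`. -/
theorem orbit_of_constructed_configuration_is_pair
    {G : Type*} [AddCommGroup G]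
    (K : ℕ → AddSubgroup G) (hmono : Monotone K)
    (hcard : ∀ n, Nat.card (K n) = 2 ^ n)
    (hunion : ∀ a : G, ∃ n, a ∈ K n)
    (gs : ℕ → G) (hgs : ∀ m, gs m ∈ K (m + 1) ∧ gs m ∉ K m)
    (n : ℕ) (hn : 1 ≤ n)
    (x : G → ZMod 2)
    (hx1 : ∀ a ∈ K n, x a = if a ∈ K (n - 1) then 1 else 0)
    (hx2 : ∀ m, n ≤ m → ∀ k ∈ K m, x (gs m + k) = x k) :
    {y : G → ZMod 2 | ∃ h ∈ K n, y = fun a => x (a - h)} =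
      {x, fun a => 1 - x a} := by
  -- Key index-two fact: the difference of two elements of `K (m+1) \ K m` lies in `K m`.
  have key : ∀ m, ∀ a b : G, a ∈ K (m + 1) → b ∈ K (m + 1) → a ∉ K m → b ∉ K m →
      a - b ∈ K m := by
    intro m a b haK hbK ha hb
    have hle : K m ≤ K (m + 1) := hmono (Nat.le_succ m)
    set H : AddSubgroup (K (m + 1)) := (K m).addSubgroupOf (K (m + 1)) with hH
    have hcardH : Nat.card H = 2 ^ m := by
      rw [Nat.card_congr (AddSubgroup.addSubgroupOfEquivOfLe hle).toEquiv, hcard]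
    have hidx : H.index = 2 := by
      have h2 : (0:ℕ) < 2 ^ m := Nat.pow_pos (by norm_num)
      have hI := H.index_mul_card
      rw [hcardH, hcard, pow_succ, mul_comm (2 ^ m) 2] at hI
      exact Nat.eq_of_mul_eq_mul_right h2 hI
    have h1 : (⟨a, haK⟩ : K (m + 1)) ∉ H := by
      simpa [hH, AddSubgroup.mem_addSubgroupOf] using ha
    have h2 : (-⟨b, hbK⟩ : K (m + 1)) ∉ H := by
      simpa [hH, AddSubgroup.mem_addSubgroupOf] using hb
    have hmem : (⟨a, haK⟩ : K (m + 1)) + (-⟨b, hbK⟩) ∈ H := by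
      rw [AddSubgroup.add_mem_iff_of_index_two hidx]
      simp [h1, h2]
    simpa [hH, AddSubgroup.mem_addSubgroupOf, sub_eq_add_neg] using hmem
  have hn' : n - 1 + 1 = n := Nat.succ_pred_eq_of_pos hn
  -- main translation computation
  have main0 : ∀ h ∈ K (n - 1), ∀ m, n ≤ m → ∀ a ∈ K m, x (a - h) = x a := by
    intro h hh m hm
    induction m with
    | zero => intro a ha; omega
    | succ m ih =>
      intro a ha
      rcases Nat.lt_or_ge n (m + 1) with hlt | hge
      · have hm' : n ≤ m := by omega
        have hhm : h ∈ K m := hmono (by omega) hh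
        by_cases ham : a ∈ K m
        · exact ih hm' a ham
        · have hk : a - gs m ∈ K m := key m a (gs m) ha (hgs m).1 ham (hgs m).2
          have e1 : a - h = gs m + (a - gs m - h) := by abel
          have e2 : a = gs m + (a - gs m) := by abel
          rw [e1, hx2 m hm' _ (sub_mem hk hhm), ih hm' _ hk, ← hx2 m hm' _ hk, ← e2]
      · -- m + 1 = n : base case
        have hmn : m + 1 = n := by omega
        subst hmn
        have hhn : h ∈ K (m + 1) := hmono (by omega) hh
        have hahn : a - h ∈ K (m + 1) := sub_mem ha hhn
        rw [hx1 a ha, hx1 _ hahn]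
        have hm1 : m + 1 - 1 = m := rfl
        rw [hm1]
        by_cases ham : a ∈ K m
        · simp [ham, sub_mem ham (hn' ▸ hh)]
        · have : a - h ∉ K m := fun hc => ham (by
            have := add_mem hc hh
            simpa using this)
          simp [ham, this]
  have main1 : ∀ h ∈ K n, h ∉ K (n - 1) → ∀ m, n ≤ m → ∀ a ∈ K m,
      x (a - h) = 1 - x a := by
    intro h hh hh' m hm
    induction m with
    | zero => intro a ha; omega
    | succ m ih =>
      intro a ha
      rcases Nat.lt_or_ge n (m + 1) with hlt | hge
      · have hm' : n ≤ m := by omega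
        have hhm : h ∈ K m := hmono (by omega) hh
        by_cases ham : a ∈ K m
        · exact ih hm' a ham
        · have hk : a - gs m ∈ K m := key m a (gs m) ha (hgs m).1 ham (hgs m).2
          have e1 : a - h = gs m + (a - gs m - h) := by abel
          have e2 : a = gs m + (a - gs m) := by abel
          rw [e1, hx2 m hm' _ (sub_mem hk hhm), ih hm' _ hk, ← hx2 m hm' _ hk, ← e2]
      · have hmn : m + 1 = n := by omega
        subst hmn
        have hahn : a - h ∈ K (m + 1) := sub_mem ha hh
        rw [hx1 a ha, hx1 _ hahn]
        have hm1 : m + 1 - 1 = m := rfl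
        rw [hm1]
        have hhm : h ∉ K m := fun hc => hh' hc
        by_cases ham : a ∈ K m
        · have : a - h ∉ K m := fun hc => hhm (by
            have := sub_mem ham hc
            simpa using this)
          simp [ham, this]
        · have : a - h ∈ K m := key m a h ha hh ham hhm
          simp [ham, this]
  -- Upgrade to all of G
  have main0' : ∀ h ∈ K (n - 1), ∀ a : G, x (a - h) = x a := by
    intro h hh a
    obtain ⟨m, hma⟩ := hunion a
    exact main0 h hh (max m n) (le_max_right _ _) a (hmono (le_max_left _ _) hma)
  have main1' : ∀ h ∈ K n, h ∉ K (n - 1) → ∀ a : G, x (a - h) = 1 - x a := by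
    intro h hh hh' a
    obtain ⟨m, hma⟩ := hunion a
    exact main1 h hh hh' (max m n) (le_max_right _ _) a (hmono (le_max_left _ _) hma)
  ext y
  simp only [Set.mem_setOf_eq, Set.mem_insert_iff, Set.mem_singleton_iff]
  constructor
  · rintro ⟨h, hh, rfl⟩
    by_cases hh' : h ∈ K (n - 1)
    · left; funext a; exact main0' h hh' a
    · right; funext a; exact main1' h hh hh' a
  · rintro (rfl | rfl)
    · exact ⟨0, zero_mem _, by funext a; rw [sub_zero]⟩
    · refine ⟨gs (n - 1), hn' ▸ (hgs (n - 1)).1, ?_⟩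
      funext a
      exact (main1' _ (hn' ▸ (hgs (n - 1)).1) (hgs (n - 1)).2 a).symm
end

section
/- There exists an inductively compact group K(∞) (the union of an increasing chain of compact groups), a compact metric space X on which K(∞) acts by homeomorphisms, and a sequence of points (x_n) in X such that the orbital measures μ_n^{x_n} converge weakly to a K(∞)-invariant probability measure that is not ergodic; in fact one can take the limit to be (δ_a + δ_b)/2 for two distinct fixed points a, b of the action. -/
open Filter Topology

/-- packaged counterexample data: an inductively compact group `G = ⋃ K n`
(increasing chain of compact subgroups with normalized Haar measures), a compact metric space
`X` on which `G` acts by homeomorphisms, a sequence of points `x n`, and two distinct fixed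
points `a, b` such that the orbital measures `μ_n^{x n}` converge weakly to the measure
`(δ_a + δ_b)/2`, which is `G`-invariant but not ergodic. -/
structure OrbitalLimitNotErgodicCounterexample where
  G : Type
  [grpG : Group G]
  [topG : TopologicalSpace G]
  [topGrpG : IsTopologicalGroup G]
  [measG : MeasurableSpace G]
  K : ℕ → Subgroup G
  mono : Monotone K
  cpt : ∀ n, IsCompact ((K n : Set G))
  union : ∀ g : G, ∃ n, g ∈ K n
  m : ∀ n, MeasureTheory.Measure (K n)
  prob : ∀ n, MeasureTheory.IsProbabilityMeasure (m n)
  haar : ∀ n (h : K n), MeasureTheory.Measure.map (fun g => h * g) (m n) = m n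
  X : Type
  [metX : MetricSpace X]
  [cptX : CompactSpace X]
  [measX : MeasurableSpace X]
  [borelX : BorelSpace X]
  [act : MulAction G X]
  homeo : ∀ g : G, Continuous (fun y : X => g • y)
  x : ℕ → X
  a : X
  b : X
  hab : a ≠ b
  fixa : ∀ g : G, g • a = a
  fixb : ∀ g : G, g • b = b
  conv : ∀ f : C(X, ℝ),
    Tendsto (fun n => ∫ g : K n, f ((g : G) • x n) ∂(m n)) atTop
      (𝓝 (∫ y, f y ∂((2 : ENNReal)⁻¹ •
        (MeasureTheory.Measure.dirac a + MeasureTheory.Measure.dirac b))))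
  inv : ∀ (g : G) (S : Set X), MeasurableSet S →
    ((2 : ENNReal)⁻¹ • (MeasureTheory.Measure.dirac a + MeasureTheory.Measure.dirac b))
        ((fun y => g • y) ⁻¹' S) =
      ((2 : ENNReal)⁻¹ • (MeasureTheory.Measure.dirac a + MeasureTheory.Measure.dirac b)) S
  notErg : ∃ S : Set X, MeasurableSet S ∧ (∀ g : G, (fun y => g • y) ⁻¹' S = S) ∧
    ((2 : ENNReal)⁻¹ • (MeasureTheory.Measure.dirac a + MeasureTheory.Measure.dirac b)) S ≠ 0 ∧
    ((2 : ENNReal)⁻¹ • (MeasureTheory.Measure.dirac a + MeasureTheory.Measure.dirac b)) S ≠ 1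

set_option synthInstance.maxHeartbeats 1000000
set_option maxHeartbeats 1000000

namespace OLNE

open MeasureTheory

/-! ### Generic measure lemmas for uniform measures on finite groups -/

variable {H : Type} [Group H] [mH : MeasurableSpace H]

lemma measurable_of_all {a b : Type*} [MeasurableSpace a] [MeasurableSpace b]
    (h : ∀ s : Set a, MeasurableSet s) (f : a → b) : Measurable f := fun _ _ => h _

lemma measSet_top (hH : mH = ⊤) {K : Subgroup H} (s : Set ↥K) : MeasurableSet s := by
  refine ⟨Subtype.val '' s, ?_, Subtype.val_injective.preimage_image s⟩
  rw [hH]; trivial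

noncomputable def unif (K : Type) [MeasurableSpace K] : Measure K :=
  (Nat.card K : ENNReal)⁻¹ • Measure.count

lemma unif_prob (K : Type) [MeasurableSpace K] [Finite K] [Nonempty K] :
    IsProbabilityMeasure (unif K) := by
  constructor
  letI : Fintype K := Fintype.ofFinite K
  rw [unif, Measure.smul_apply, Measure.count_univ, smul_eq_mul, ENat.card_eq_coe_natCard, ENat.toENNReal_coe, Nat.card_eq_fintype_card]
  exact ENNReal.inv_mul_cancel (by exact_mod_cast Fintype.card_ne_zero (α := K)) (ENNReal.natCast_ne_top _)

lemma count_map_mul (hH : mH = ⊤) (K : Subgroup H) (h : ↥K) :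
    Measure.map (fun g => h * g) (Measure.count : Measure ↥K) = Measure.count := by
  ext s hs
  rw [Measure.map_apply (measurable_of_all (fun _ => measSet_top hH _) _) hs,
    Measure.count_apply (measSet_top hH _), Measure.count_apply hs]
  exact congrArg _ (Set.encard_congr
    (⟨fun g => ⟨h * g.1, g.2⟩, fun g => ⟨h⁻¹ * g.1, by simpa using g.2⟩,
      fun g => by ext; simp, fun g => by ext; simp⟩ :
      ((fun g => h * g) ⁻¹' s) ≃ s))

lemma unif_map_mul (hH : mH = ⊤) (K : Subgroup H) (h : ↥K) :
    Measure.map (fun g => h * g) (unif ↥K) = unif ↥K := by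
  rw [unif, Measure.map_smul, count_map_mul hH]

/-! ### The group -/

abbrev GG : Type := Multiplicative (ℕ →₀ ZMod 2)

instance : TopologicalSpace GG := ⊥
instance : DiscreteTopology GG := ⟨rfl⟩
instance : IsTopologicalGroup GG := { }
instance GGMeas : MeasurableSpace GG := ⊤
instance : Countable GG := inferInstanceAs (Countable (ℕ →₀ ZMod 2))
noncomputable instance : Encodable GG := Encodable.ofCountable GG

noncomputable def S (n : ℕ) : Subgroup GG where
  carrier := {g | ∀ i, n < i → Multiplicative.toAdd g i = 0}
  one_mem' := by intro i _; rfl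
  mul_mem' := by
    intro a b ha hb i hi
    show (Multiplicative.toAdd a + Multiplicative.toAdd b) i = 0
    rw [Finsupp.add_apply, ha i hi, hb i hi, add_zero]
  inv_mem' := by
    intro a ha i hi
    show (-Multiplicative.toAdd a) i = 0
    rw [Finsupp.neg_apply, ha i hi, neg_zero]

lemma mem_S {n : ℕ} {g : GG} : g ∈ S n ↔ ∀ i, n < i → Multiplicative.toAdd g i = 0 := Iff.rfl

lemma S_mono : Monotone S := fun n m hnm g hg i hi => hg i (lt_of_le_of_lt hnm hi)

lemma S_union (g : GG) : ∃ n, g ∈ S n := by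
  refine ⟨(Multiplicative.toAdd g).support.sup id, fun i hi => ?_⟩
  by_contra h
  have hmem : i ∈ (Multiplicative.toAdd g).support := Finsupp.mem_support_iff.2 h
  have := Finset.le_sup (f := id) hmem
  simp only [id] at this
  omega

instance S_finite (n : ℕ) : Finite ↥(S n) := by
  have : Function.Injective
      (fun g : ↥(S n) => fun i : Fin (n+1) => Multiplicative.toAdd (g : GG) i.val) := by
    intro g g' h
    ext1
    apply Multiplicative.toAdd.injective
    ext i
    rcases le_or_gt i n with hin | hin
    · exact congrFun h ⟨i, Nat.lt_succ_of_le hin⟩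
    · rw [g.2 i hin, g'.2 i hin]
  exact Finite.of_injective _ this

/-- The coset representative: the element with a single `1` at coordinate `n+1`. -/
noncomputable def eG (n : ℕ) : GG := Multiplicative.ofAdd (Finsupp.single (n + 1) 1)

lemma eG_mem (n : ℕ) : eG n ∈ S (n + 1) := by
  intro i hi
  show (Finsupp.single (n + 1) (1 : ZMod 2)) i = 0
  exact Finsupp.single_eq_of_ne (by omega)

lemma toAdd_eG (n : ℕ) : Multiplicative.toAdd (eG n) = Finsupp.single (n + 1) 1 := rfl

/-! ### The space -/

noncomputable instance : MetricSpace Bool :=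
  (Topology.IsEmbedding.comapMetricSpace (fun b : Bool => (cond b 1 0 : ℝ))
    ((continuous_of_discreteTopology).isClosedEmbedding
      (fun a b h => by cases a <;> cases b <;> simp_all)).isEmbedding)

abbrev X : Type := GG → Bool

noncomputable instance XMet : MetricSpace X := PiCountable.metricSpace

instance XCpt : CompactSpace X := by infer_instance

noncomputable instance XMeas : MeasurableSpace X := borel X

instance XBorel : BorelSpace X := ⟨rfl⟩

noncomputable instance XAct : MulAction GG X where
  smul g v := fun h => v (g⁻¹ * h)
  one_smul v := by funext h; show v (1⁻¹ * h) = v h; rw [inv_one, one_mul]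
  mul_smul g g' v := by
    funext h
    show v ((g * g')⁻¹ * h) = v (g'⁻¹ * (g⁻¹ * h))
    rw [mul_inv_rev, mul_assoc]

lemma smul_def (g : GG) (v : X) (h : GG) : (g • v) h = v (g⁻¹ * h) := rfl

lemma continuous_smul_X (g : GG) : Continuous (fun v : X => g • v) :=
  continuous_pi fun h => continuous_apply (g⁻¹ * h)

open scoped Classical in
/-- The indicator configuration of the subgroup `S n`. -/
noncomputable def xs (n : ℕ) : X := fun h => if h ∈ S n then true else false

noncomputable def ws (n : ℕ) : X := eG n • xs n

/-- constant-0 configuration -/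
def aa : X := fun _ => false

/-- constant-1 configuration -/
def bb : X := fun _ => true

lemma aa_ne_bb : aa ≠ bb := fun h => by simpa [aa, bb] using congrFun h 1

lemma smul_aa (g : GG) : g • aa = aa := rfl

lemma smul_bb (g : GG) : g • bb = bb := rfl

lemma tendsto_xs : Tendsto xs atTop (𝓝 bb) := by
  rw [tendsto_pi_nhds]
  intro h
  obtain ⟨N, hN⟩ := S_union h
  refine Tendsto.congr' ?_ tendsto_const_nhds
  filter_upwards [eventually_ge_atTop N] with n hn
  classical
  exact (if_pos (S_mono hn hN)).symm

lemma tendsto_ws : Tendsto ws atTop (𝓝 aa) := by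
  rw [tendsto_pi_nhds]
  intro h
  obtain ⟨N, hN⟩ := S_union h
  refine Tendsto.congr' ?_ tendsto_const_nhds
  filter_upwards [eventually_ge_atTop N] with n hn
  classical
  have hmem : ¬((eG n)⁻¹ * h ∈ S n) := by
    intro hc
    have h1 := hc (n + 1) (Nat.lt_succ_self n)
    have h2 : Multiplicative.toAdd h (n + 1) = 0 := S_mono hn hN (n + 1) (Nat.lt_succ_self n)
    rw [show Multiplicative.toAdd ((eG n)⁻¹ * h)
        = -Multiplicative.toAdd (eG n) + Multiplicative.toAdd h from rfl] at h1
    rw [Finsupp.add_apply, Finsupp.neg_apply, toAdd_eG, Finsupp.single_eq_same, h2] at h1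
    exact absurd h1 (by decide)
  show aa h = ws n h
  simp only [ws, smul_def, xs, aa, if_neg hmem]

lemma orbit_eq (n : ℕ) (g : GG) (hg : g ∈ S (n + 1)) :
    g • xs n = if Multiplicative.toAdd g (n + 1) = 0 then xs n else ws n := by
  classical
  by_cases hc : Multiplicative.toAdd g (n + 1) = 0
  · rw [if_pos hc]
    have hgn : g ∈ S n := by
      intro i hi
      rcases eq_or_lt_of_le (Nat.succ_le_of_lt hi) with h | h
      · rw [← h]; exact hc
      · exact hg i h
    funext h
    show xs n (g⁻¹ * h) = xs n h
    simp only [xs]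
    exact if_congr ((S n).mul_mem_cancel_left ((S n).inv_mem hgn)) rfl rfl
  · rw [if_neg hc]
    have hone : ∀ v : ZMod 2, v ≠ 0 → -(1 : ZMod 2) + v = 0 := by decide
    have hrep : (eG n)⁻¹ * g ∈ S n := by
      intro i hi
      rw [show Multiplicative.toAdd ((eG n)⁻¹ * g)
          = -Multiplicative.toAdd (eG n) + Multiplicative.toAdd g from rfl]
      rw [Finsupp.add_apply, Finsupp.neg_apply, toAdd_eG]
      rcases eq_or_lt_of_le (Nat.succ_le_of_lt hi) with h | h
      · rw [← h, Finsupp.single_eq_same]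
        exact hone _ hc
      · rw [Finsupp.single_eq_of_ne (by omega), hg i h, neg_zero, zero_add]
    funext h
    show xs n (g⁻¹ * h) = ws n h
    simp only [ws, smul_def, xs]
    refine if_congr ?_ rfl rfl
    have : g⁻¹ * h = (g⁻¹ * eG n) * ((eG n)⁻¹ * h) := by group
    rw [this]
    refine (S n).mul_mem_cancel_left ?_
    have := (S n).inv_mem hrep
    rwa [mul_inv_rev, inv_inv] at this


instance probK (n : ℕ) : IsProbabilityMeasure (unif ↥(S (n + 1))) := unif_prob _

/-- The subset of the compact group where the `n+1`-st coordinate vanishes. -/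
def Aset (n : ℕ) : Set ↥(S (n + 1)) := {g | Multiplicative.toAdd (g : GG) (n + 1) = 0}

lemma Aset_pre (n : ℕ) :
    (fun g => (⟨eG n, eG_mem n⟩ : ↥(S (n + 1))) * g) ⁻¹' (Aset n) = (Aset n)ᶜ := by
  ext g
  simp only [Set.mem_preimage, Aset, Set.mem_compl_iff, Set.mem_setOf_eq]
  rw [show ((((⟨eG n, eG_mem n⟩ : ↥(S (n + 1))) * g : ↥(S (n + 1)))) : GG) = eG n * (g : GG)
    from rfl]
  rw [show Multiplicative.toAdd (eG n * (g : GG))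
      = Finsupp.single (n + 1) 1 + Multiplicative.toAdd (g : GG) from rfl]
  rw [Finsupp.add_apply, Finsupp.single_eq_same]
  generalize Multiplicative.toAdd (g : GG) (n + 1) = v
  revert v; decide

lemma measure_Aset_compl (n : ℕ) : unif ↥(S (n + 1)) ((Aset n)ᶜ) = unif ↥(S (n + 1)) (Aset n) := by
  rw [← Aset_pre n, ← Measure.map_apply (measurable_of_all (fun s => measSet_top rfl s) _)
    (measSet_top rfl _), unif_map_mul rfl]

lemma measure_Aset (n : ℕ) : unif ↥(S (n + 1)) (Aset n) = 2⁻¹ := by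
  have hsum := measure_add_measure_compl (μ := unif ↥(S (n + 1))) (measSet_top rfl (Aset n))
  rw [measure_univ, measure_Aset_compl] at hsum
  exact ENNReal.eq_inv_of_mul_eq_one_left (by rw [mul_two]; exact hsum)

lemma integral_orbit (n : ℕ) (f : C(X, ℝ)) :
    ∫ g : ↥(S (n + 1)), f ((g : GG) • xs n) ∂(unif ↥(S (n + 1)))
      = (2⁻¹ : ℝ) * f (xs n) + (2⁻¹ : ℝ) * f (ws n) := by
  have hfun : (fun g : ↥(S (n + 1)) => f ((g : GG) • xs n))
      = fun g => (Aset n).indicator (fun _ => f (xs n)) g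
        + (Aset n)ᶜ.indicator (fun _ => f (ws n)) g := by
    funext g
    by_cases hg : g ∈ Aset n
    · have hg' : (Multiplicative.toAdd (g : GG)) (n + 1) = 0 := hg
      rw [Set.indicator_of_mem hg, Set.indicator_of_notMem (by simpa using hg), add_zero,
        orbit_eq n (g : GG) g.2, if_pos hg']
    · have hg' : ¬(Multiplicative.toAdd (g : GG)) (n + 1) = 0 := hg
      rw [Set.indicator_of_notMem hg, Set.indicator_of_mem (by simpa using hg), zero_add,
        orbit_eq n (g : GG) g.2, if_neg hg']
  rw [hfun, integral_add ((integrable_const _).indicator (measSet_top rfl _))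
    ((integrable_const _).indicator (measSet_top rfl _)),
    integral_indicator_const _ (measSet_top rfl _), integral_indicator_const _ (measSet_top rfl _),
    measureReal_def, measureReal_def, measure_Aset, measure_Aset_compl, measure_Aset]
  simp [ENNReal.toReal_inv]

lemma integrable_dirac_X (f : C(X, ℝ)) (y : X) : Integrable ⇑f (Measure.dirac y) := by
  refine ⟨f.continuous.measurable.aestronglyMeasurable, ?_⟩
  rw [HasFiniteIntegral, lintegral_dirac]
  exact ENNReal.coe_lt_top

lemma limit_val (f : C(X, ℝ)) :
    ∫ y, f y ∂((2 : ENNReal)⁻¹ • (Measure.dirac aa + Measure.dirac bb))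
      = (2⁻¹ : ℝ) * f bb + (2⁻¹ : ℝ) * f aa := by
  rw [integral_smul_measure, integral_add_measure (integrable_dirac_X f aa)
    (integrable_dirac_X f bb), integral_dirac, integral_dirac]
  simp [ENNReal.toReal_inv]
  ring

lemma conv_lemma (f : C(X, ℝ)) :
    Filter.Tendsto (fun n => ∫ g : ↥(S (n + 1)), f ((g : GG) • xs n) ∂(unif ↥(S (n + 1))))
      Filter.atTop
      (nhds (∫ y, f y ∂((2 : ENNReal)⁻¹ • (Measure.dirac aa + Measure.dirac bb)))) := by
  rw [limit_val f]
  have h1 : Filter.Tendsto (fun n => (2⁻¹ : ℝ) * f (xs n) + (2⁻¹ : ℝ) * f (ws n)) Filter.atTop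
      (nhds ((2⁻¹ : ℝ) * f bb + (2⁻¹ : ℝ) * f aa)) :=
    (Filter.Tendsto.const_mul _ ((f.continuous.tendsto bb).comp tendsto_xs)).add
      (Filter.Tendsto.const_mul _ ((f.continuous.tendsto aa).comp tendsto_ws))
  exact h1.congr fun n => (integral_orbit n f).symm

lemma inv_lemma (g : GG) (Sset : Set X) (hS : MeasurableSet Sset) :
    ((2 : ENNReal)⁻¹ • (Measure.dirac aa + Measure.dirac bb)) ((fun y => g • y) ⁻¹' Sset)
      = ((2 : ENNReal)⁻¹ • (Measure.dirac aa + Measure.dirac bb)) Sset := by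
  have hpre : MeasurableSet ((fun y : X => g • y) ⁻¹' Sset) := (continuous_smul_X g).measurable hS
  have ea : ((fun y : X => g • y) ⁻¹' Sset).indicator (1 : X → ENNReal) aa
      = Sset.indicator 1 aa := by
    by_cases h : aa ∈ Sset
    · rw [Set.indicator_of_mem (by simp [Set.mem_preimage, smul_aa, h]), Set.indicator_of_mem h]
    · rw [Set.indicator_of_notMem (by simp [Set.mem_preimage, smul_aa, h]),
        Set.indicator_of_notMem h]
  have eb : ((fun y : X => g • y) ⁻¹' Sset).indicator (1 : X → ENNReal) bb
      = Sset.indicator 1 bb := by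
    by_cases h : bb ∈ Sset
    · rw [Set.indicator_of_mem (by simp [Set.mem_preimage, smul_bb, h]), Set.indicator_of_mem h]
    · rw [Set.indicator_of_notMem (by simp [Set.mem_preimage, smul_bb, h]),
        Set.indicator_of_notMem h]
  simp only [Measure.smul_apply, Measure.add_apply, Measure.dirac_apply' _ hpre,
    Measure.dirac_apply' _ hS, ea, eb]

lemma notErg_lemma : ∃ Sset : Set X, MeasurableSet Sset
    ∧ (∀ g : GG, (fun y => g • y) ⁻¹' Sset = Sset)
    ∧ ((2 : ENNReal)⁻¹ • (Measure.dirac aa + Measure.dirac bb)) Sset ≠ 0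
    ∧ ((2 : ENNReal)⁻¹ • (Measure.dirac aa + Measure.dirac bb)) Sset ≠ 1 := by
  refine ⟨{aa}, isClosed_singleton.measurableSet, fun g => ?_, ?_, ?_⟩
  · ext y
    simp only [Set.mem_preimage, Set.mem_singleton_iff]
    constructor
    · intro h
      have : (g⁻¹ : GG) • (g • y) = g⁻¹ • aa := by rw [h]
      rwa [inv_smul_smul, smul_aa] at this
    · rintro rfl; exact smul_aa g
  · have h1 : ((2 : ENNReal)⁻¹ • (Measure.dirac aa + Measure.dirac bb)) {aa} = 2⁻¹ := by
      rw [Measure.smul_apply, Measure.add_apply,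
        Measure.dirac_apply' _ isClosed_singleton.measurableSet,
        Measure.dirac_apply' _ isClosed_singleton.measurableSet]
      rw [Set.indicator_of_mem (Set.mem_singleton aa),
        Set.indicator_of_notMem (fun h => aa_ne_bb (Set.mem_singleton_iff.mp h).symm)]
      simp
    rw [h1]; simp
  · have h1 : ((2 : ENNReal)⁻¹ • (Measure.dirac aa + Measure.dirac bb)) {aa} = 2⁻¹ := by
      rw [Measure.smul_apply, Measure.add_apply,
        Measure.dirac_apply' _ isClosed_singleton.measurableSet,
        Measure.dirac_apply' _ isClosed_singleton.measurableSet]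
      rw [Set.indicator_of_mem (Set.mem_singleton aa),
        Set.indicator_of_notMem (fun h => aa_ne_bb (Set.mem_singleton_iff.mp h).symm)]
      simp
    rw [h1]
    intro h
    have := ENNReal.inv_eq_one.mp h
    norm_num at this

end OLNE

noncomputable def OLNE.counterexample : OrbitalLimitNotErgodicCounterexample where
  G := OLNE.GG
  grpG := inferInstance
  topG := inferInstance
  topGrpG := inferInstance
  measG := OLNE.GGMeas
  K n := OLNE.S (n + 1)
  mono := fun n m h => OLNE.S_mono (by omega)
  cpt n := by
    haveI : Finite ↥((OLNE.S (n + 1) : Set OLNE.GG)) := OLNE.S_finite (n + 1)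
    exact (Set.toFinite _).isCompact
  union g := (OLNE.S_union g).imp fun n h => OLNE.S_mono (Nat.le_succ n) h
  m n := OLNE.unif ↥(OLNE.S (n + 1))
  prob n := OLNE.unif_prob _
  haar n h := OLNE.unif_map_mul rfl _ h
  X := OLNE.X
  metX := OLNE.XMet
  cptX := OLNE.XCpt
  measX := OLNE.XMeas
  borelX := OLNE.XBorel
  act := OLNE.XAct
  homeo := OLNE.continuous_smul_X
  x := OLNE.xs
  a := OLNE.aa
  b := OLNE.bb
  hab := OLNE.aa_ne_bb
  fixa := OLNE.smul_aa
  fixb := OLNE.smul_bb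
  conv := OLNE.conv_lemma
  inv := OLNE.inv_lemma
  notErg := OLNE.notErg_lemma

/-- such a counterexample exists (the Prüfer 2-group acting by translations on
`{0,1}^{K(∞)}`, with limit `(δ_a + δ_b)/2` for the two constant configurations). -/
theorem exists_orbital_limit_not_ergodic :
    Nonempty OrbitalLimitNotErgodicCounterexample := ⟨OLNE.counterexample⟩
end
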